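/- arXiv:1709.04968 — 5 statements merged into one kernel-verified Lean document; each statement's English description precedes it below -/
import Mathlib

section
/- Let A be an (n×n) complex Hermitian matrix with eigenvalues λ = (λ_1, …, λ_n) ∈ ℝ^n (listed with multiplicity). Then the diagonal of A (whose entries are real since A is Hermitian) is majorized by λ: diag(A) ≺ λ. Concretely, for every subset S of indices with |S| = k, the sum ∑_{i∈S} A_{ii} is at most the sum of the k largest eigenvalues of A, and ∑_{i=1}^n A_{ii} = ∑_{i=1}^n λ_i. -/
open scoped BigOperators

/-- Vector majorization: `y ≺ x` iff every partial sum of `y` over a subset of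
cardinality `k` is at most the sum of the `k` largest entries of `x`
(equivalently, is at most the sum of `x` over *some* subset of cardinality `k`),
and the total sums agree. -/
def IsMajorizedBy {n : ℕ} (y x : Fin n → ℝ) : Prop :=
  (∀ S : Finset (Fin n), ∃ T : Finset (Fin n), T.card = S.card ∧
      ∑ i ∈ S, y i ≤ ∑ i ∈ T, x i) ∧
  ∑ i, y i = ∑ i, x i

lemma aux_top_sum {n : ℕ} (lam c : Fin n → ℝ) (k : ℕ) (hk : k ≤ n)
    (hc0 : ∀ j, 0 ≤ c j) (hc1 : ∀ j, c j ≤ 1) (hsum : ∑ j, c j = (k : ℝ)) :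
    ∃ T : Finset (Fin n), T.card = k ∧ ∑ j, c j * lam j ≤ ∑ j ∈ T, lam j := by
  classical
  obtain ⟨T, hT, hmax⟩ := Finset.exists_max_image
    ((Finset.univ : Finset (Fin n)).powersetCard k) (fun T => ∑ j ∈ T, lam j)
    (Finset.powersetCard_nonempty.mpr (by simpa using hk))
  have hTcard : T.card = k := (Finset.mem_powersetCard.mp hT).2
  refine ⟨T, hTcard, ?_⟩
  rcases Nat.eq_zero_or_pos k with hk0 | hk0
  · subst hk0
    have hz : ∀ j ∈ (Finset.univ : Finset (Fin n)), c j = 0 :=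
      (Finset.sum_eq_zero_iff_of_nonneg (fun j _ => hc0 j)).mp (by simpa using hsum)
    have hT0 : T = ∅ := Finset.card_eq_zero.mp hTcard
    have hz2 : ∑ j, c j * lam j = 0 :=
      Finset.sum_eq_zero fun j hj => by rw [hz j hj, zero_mul]
    rw [hz2, hT0]
    simp
  · have hTne : T.Nonempty := Finset.card_pos.mp (hTcard ▸ hk0)
    obtain ⟨m, hm, hmin⟩ := T.exists_min_image lam hTne
    set t := lam m with ht
    have hout : ∀ j, j ∉ T → lam j ≤ t := by
      intro j hj
      by_contra h
      push_neg at h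
      have hcard : (insert j (T.erase m)).card = k := by
        rw [Finset.card_insert_of_notMem (fun hmem => hj (Finset.mem_of_mem_erase hmem)),
          Finset.card_erase_of_mem hm, hTcard]
        omega
      have hle := hmax (insert j (T.erase m))
        (Finset.mem_powersetCard.mpr ⟨Finset.subset_univ _, hcard⟩)
      rw [Finset.sum_insert (fun hmem => hj (Finset.mem_of_mem_erase hmem))] at hle
      have herase : lam m + ∑ x ∈ T.erase m, lam x = ∑ x ∈ T, lam x :=
        Finset.add_sum_erase _ _ hm
      linarith
    have h1 : ∀ j ∈ T, c j * lam j ≤ lam j - (1 - c j) * t := by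
      intro j hj
      nlinarith [hc1 j, hmin j hj]
    have h2 : ∀ j ∈ Tᶜ, c j * lam j ≤ c j * t := by
      intro j hj
      exact mul_le_mul_of_nonneg_left (hout j (by simpa using hj)) (hc0 j)
    have e1 : ∑ j ∈ T, (1 - c j) = (k : ℝ) - ∑ j ∈ T, c j := by
      rw [Finset.sum_sub_distrib]
      simp [hTcard]
    have e2 : ∑ j ∈ T, c j + ∑ j ∈ Tᶜ, c j = (k : ℝ) := by
      rw [Finset.sum_add_sum_compl, hsum]
    calc ∑ j, c j * lam j
        = ∑ j ∈ T, c j * lam j + ∑ j ∈ Tᶜ, c j * lam j :=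
          (Finset.sum_add_sum_compl T _).symm
      _ ≤ ∑ j ∈ T, (lam j - (1 - c j) * t) + ∑ j ∈ Tᶜ, c j * t :=
          add_le_add (Finset.sum_le_sum h1) (Finset.sum_le_sum h2)
      _ = ∑ j ∈ T, lam j - (∑ j ∈ T, (1 - c j)) * t + (∑ j ∈ Tᶜ, c j) * t := by
          rw [Finset.sum_sub_distrib, ← Finset.sum_mul, ← Finset.sum_mul]
      _ = ∑ j ∈ T, lam j := by
          have h3 : (k : ℝ) - ∑ j ∈ T, c j = ∑ j ∈ Tᶜ, c j := by linarith
          rw [e1, h3]; ring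

/-- **Schur's theorem**: the diagonal of a Hermitian matrix is majorized by its
eigenvalues. -/
theorem schur_diag_majorized_by_eigenvalues {n : ℕ}
    (A : Matrix (Fin n) (Fin n) ℂ) (hA : A.IsHermitian) :
    IsMajorizedBy (fun i => (A i i).re) hA.eigenvalues := by
  classical
  set U : Matrix (Fin n) (Fin n) ℂ := (hA.eigenvectorUnitary : Matrix (Fin n) (Fin n) ℂ) with hUdef
  have hUU : U * star U = 1 := Matrix.mem_unitaryGroup_iff.mp hA.eigenvectorUnitary.2
  have hUU' : star U * U = 1 := Matrix.mem_unitaryGroup_iff'.mp hA.eigenvectorUnitary.2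
  have hrow : ∀ i, ∑ j, Complex.normSq (U i j) = 1 := by
    intro i
    have := congrArg (fun M => (M i i).re) hUU
    simp only [Matrix.mul_apply, Matrix.one_apply_eq, Matrix.star_apply, RCLike.star_def, Complex.one_re] at this
    rw [← this]
    rw [Complex.re_sum]
    refine Finset.sum_congr rfl fun j _ => ?_
    rw [Complex.mul_conj]
    simp
  have hcol : ∀ j, ∑ i, Complex.normSq (U i j) = 1 := by
    intro j
    have := congrArg (fun M => (M j j).re) hUU'
    simp only [Matrix.mul_apply, Matrix.one_apply_eq, Matrix.star_apply, RCLike.star_def, Complex.one_re] at this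
    rw [← this]
    rw [Complex.re_sum]
    refine Finset.sum_congr rfl fun i _ => ?_
    rw [mul_comm, Complex.mul_conj]
    simp
  have hdiag : ∀ i, (A i i).re = ∑ j, hA.eigenvalues j * Complex.normSq (U i j) := by
    intro i
    have hAii : A i i = ∑ j, U i j * ((hA.eigenvalues j : ℝ) : ℂ) * (starRingEnd ℂ) (U i j) := by
      conv_lhs => rw [hA.spectral_theorem]
      rw [Unitary.conjStarAlgAut_apply, Matrix.mul_apply]
      refine Finset.sum_congr rfl fun j _ => ?_
      rw [Matrix.mul_diagonal, Matrix.star_apply, RCLike.star_def]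
      rfl
    rw [hAii, Complex.re_sum]
    refine Finset.sum_congr rfl fun j _ => ?_
    rw [mul_comm (U i j), mul_assoc, Complex.mul_conj, ← Complex.ofReal_mul,
      Complex.ofReal_re]
  constructor
  · intro S
    set c : Fin n → ℝ := fun j => ∑ i ∈ S, Complex.normSq (U i j) with hcdef
    have hc0 : ∀ j, 0 ≤ c j := fun j => Finset.sum_nonneg fun i _ => Complex.normSq_nonneg _
    have hc1 : ∀ j, c j ≤ 1 := by
      intro j
      calc c j ≤ ∑ i, Complex.normSq (U i j) :=
            Finset.sum_le_sum_of_subset_of_nonneg (Finset.subset_univ S)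
              (fun i _ _ => Complex.normSq_nonneg _)
        _ = 1 := hcol j
    have hcs : ∑ j, c j = (S.card : ℝ) := by
      rw [Finset.sum_comm]
      simp [hrow]
    have key : ∑ i ∈ S, (A i i).re = ∑ j, c j * hA.eigenvalues j := by
      simp_rw [hdiag]
      rw [Finset.sum_comm]
      refine Finset.sum_congr rfl fun j _ => ?_
      rw [hcdef]
      rw [Finset.sum_mul]
      exact Finset.sum_congr rfl fun i _ => by ring
    have hkn : S.card ≤ n := by
      simpa using Finset.card_le_univ S
    obtain ⟨T, hT, hle⟩ := aux_top_sum hA.eigenvalues c S.card hkn hc0 hc1 hcs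
    exact ⟨T, hT, by rw [key]; exact hle⟩
  · have : ∑ i, (A i i).re = ∑ j, hA.eigenvalues j := by
      simp_rw [hdiag]
      rw [Finset.sum_comm]
      refine Finset.sum_congr rfl fun j _ => ?_
      rw [← Finset.mul_sum, hcol, mul_one]
    exact this
end

section
/- (Rado's theorem) For every x ∈ ℝ^n, the set {y ∈ ℝ^n : y ≺ x} equals the convex hull of the orbit of x under the symmetric group, i.e. the convex hull of the finite set {(x_{σ(1)}, …, x_{σ(n)}) : σ a permutation of {1,…,n}}. -/
open scoped BigOperators

private lemma rado_aux_le_apply {k : ℕ} {F : Fin k → ℕ} (hF : StrictMono F) (j : Fin k) :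
    (j : ℕ) ≤ F j := by
  suffices h : ∀ m : ℕ, ∀ j : Fin k, (j : ℕ) = m → m ≤ F j from h j j rfl
  intro m
  induction m with
  | zero => intro j _; exact Nat.zero_le _
  | succ m ih =>
    intro j hj
    have hjk := j.isLt
    have hm : m < k := by omega
    have h1 : (⟨m, hm⟩ : Fin k) < j := by
      simp only [Fin.lt_def, hj]; omega
    have h2 := hF h1
    have h3 := ih ⟨m, hm⟩ rfl
    omega

private lemma rado_sum_le_topk {n m : ℕ} {w : Fin n → ℝ} (hw : Antitone w)
    (S : Finset (Fin n)) (hS : S.card = m) (hle : m ≤ n) :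
    ∑ i ∈ S, w i ≤ ∑ j : Fin m, w (Fin.castLE hle j) := by
  classical
  set e := S.orderEmbOfFin hS with he
  have himg : Finset.image e Finset.univ = S := by
    apply Finset.coe_injective
    rw [Finset.coe_image, Finset.coe_univ, Set.image_univ]
    exact S.range_orderEmbOfFin hS
  rw [← himg, Finset.sum_image (fun a _ b _ hab => e.injective hab)]
  apply Finset.sum_le_sum
  intro j _
  apply hw
  have : (j : ℕ) ≤ ((e j : Fin n) : ℕ) := by
    apply rado_aux_le_apply (F := fun j => ((e j : Fin n) : ℕ))
    intro a b hab
    exact e.strictMono hab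
  simpa [Fin.le_def] using this

private lemma rado_key_ineq {n : ℕ} {x y : Fin n → ℝ} (h : IsMajorizedBy y x)
    (c : Fin n → ℝ) :
    ∃ σ : Equiv.Perm (Fin n), ∑ i, c i * y i ≤ ∑ i, c i * x (σ i) := by
  classical
  set τ := Tuple.sort (fun i => -c i) with hτdef
  set π := Tuple.sort (fun i => -x i) with hπdef
  have hd : Antitone (fun i => c (τ i)) := by
    intro a b hab
    have := Tuple.monotone_sort (fun i => -c i) hab
    simpa using this
  have hw : Antitone (fun i => x (π i)) := by
    intro a b hab
    have := Tuple.monotone_sort (fun i => -x i) hab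
    simpa using this
  set D : ℕ → ℝ := fun k => if hk : k < n then c (τ ⟨k, hk⟩) else 0 with hD
  set Y : ℕ → ℝ := fun k => if hk : k < n then y (τ ⟨k, hk⟩) else 0 with hY
  set X : ℕ → ℝ := fun k => if hk : k < n then x (π ⟨k, hk⟩) else 0 with hX
  -- prefix sums of Y are dominated by prefix sums of X
  have hYm : ∀ m (hm : m ≤ n), ∑ j ∈ Finset.range m, Y j
      = ∑ j : Fin m, y (τ (Fin.castLE hm j)) := by
    intro m hm
    rw [← Fin.sum_univ_eq_sum_range]
    apply Finset.sum_congr rfl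
    intro j _
    have hj : (j : ℕ) < n := lt_of_lt_of_le j.isLt hm
    simp only [hY, dif_pos hj]
    rfl
  have hXm : ∀ m (hm : m ≤ n), ∑ j ∈ Finset.range m, X j
      = ∑ j : Fin m, x (π (Fin.castLE hm j)) := by
    intro m hm
    rw [← Fin.sum_univ_eq_sum_range]
    apply Finset.sum_congr rfl
    intro j _
    have hj : (j : ℕ) < n := lt_of_lt_of_le j.isLt hm
    simp only [hX, dif_pos hj]
    rfl
  have hpre : ∀ m, m ≤ n →
      ∑ j ∈ Finset.range m, Y j ≤ ∑ j ∈ Finset.range m, X j := by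
    intro m hm
    rw [hYm m hm, hXm m hm]
    -- the LHS is a sum of y over a subset of card m
    set Sy : Finset (Fin n) := Finset.image (fun j : Fin m => τ (Fin.castLE hm j))
      Finset.univ with hSy
    have hinj : Function.Injective (fun j : Fin m => τ (Fin.castLE hm j)) :=
      τ.injective.comp (Fin.castLE_injective hm)
    have hSycard : Sy.card = m := by
      rw [hSy, Finset.card_image_of_injective _ hinj, Finset.card_univ, Fintype.card_fin]
    have h1 : ∑ j : Fin m, y (τ (Fin.castLE hm j)) = ∑ i ∈ Sy, y i := by
      rw [hSy, Finset.sum_image (fun a _ b _ hab => hinj hab)]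
    obtain ⟨T, hTcard, hT⟩ := h.1 Sy
    rw [hSycard] at hTcard
    -- now bound ∑ over T of x by the top-m entries of x
    set U : Finset (Fin n) := Finset.image π.symm T with hU
    have hUcard : U.card = m := by
      rw [hU, Finset.card_image_of_injective _ π.symm.injective, hTcard]
    have h2 : ∑ i ∈ T, x i = ∑ i ∈ U, x (π i) := by
      rw [hU, Finset.sum_image (fun a _ b _ hab => π.symm.injective hab)]
      apply Finset.sum_congr rfl
      intro i _
      simp
    have h3 := rado_sum_le_topk hw U hUcard hm
    rw [h1]
    calc ∑ i ∈ Sy, y i ≤ ∑ i ∈ T, x i := hT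
      _ = ∑ i ∈ U, x (π i) := h2
      _ ≤ ∑ j : Fin m, x (π (Fin.castLE hm j)) := h3
  have htot : ∑ j ∈ Finset.range n, Y j = ∑ j ∈ Finset.range n, X j := by
    rw [hYm n le_rfl, hXm n le_rfl]
    have e1 : ∑ j : Fin n, y (τ (Fin.castLE le_rfl j)) = ∑ i, y i := by
      simpa using Equiv.sum_comp τ y
    have e2 : ∑ j : Fin n, x (π (Fin.castLE le_rfl j)) = ∑ i, x i := by
      simpa using Equiv.sum_comp π x
    rw [e1, e2, h.2]
  -- Abel summation on both sides
  have habelY := Finset.sum_range_by_parts D Y n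
  have habelX := Finset.sum_range_by_parts D X n
  simp only [smul_eq_mul] at habelY habelX
  have hstep : ∑ k ∈ Finset.range n, D k * Y k ≤ ∑ k ∈ Finset.range n, D k * X k := by
    rw [habelY, habelX, htot]
    apply sub_le_sub_left
    apply Finset.sum_le_sum
    intro k hk
    have hk' : k < n - 1 := Finset.mem_range.mp hk
    have hk1 : k + 1 < n := by omega
    have hkn : k < n := by omega
    have hDk : D (k + 1) - D k ≤ 0 := by
      simp only [hD, dif_pos hk1, dif_pos hkn]
      have : c (τ ⟨k + 1, hk1⟩) ≤ c (τ ⟨k, hkn⟩) := by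
        apply hd
        simp [Fin.le_def]
      linarith
    have hP := hpre (k + 1) (by omega)
    exact mul_le_mul_of_nonpos_left hP hDk
  -- convert back to sums over Fin n
  refine ⟨τ.symm.trans π, ?_⟩
  have eY : ∑ i, c i * y i = ∑ k ∈ Finset.range n, D k * Y k := by
    rw [← Fin.sum_univ_eq_sum_range (fun k => D k * Y k) n]
    rw [← Equiv.sum_comp τ (fun i => c i * y i)]
    apply Finset.sum_congr rfl
    intro j _
    simp only [hD, hY, dif_pos j.isLt, Fin.eta]
  have eX : ∑ i, c i * x ((τ.symm.trans π) i) = ∑ k ∈ Finset.range n, D k * X k := by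
    rw [← Fin.sum_univ_eq_sum_range (fun k => D k * X k) n]
    rw [← Equiv.sum_comp τ (fun i => c i * x ((τ.symm.trans π) i))]
    apply Finset.sum_congr rfl
    intro j _
    simp only [hD, hX, dif_pos j.isLt, Fin.eta, Equiv.trans_apply, Equiv.symm_apply_apply]
  rw [eY, eX]
  exact hstep

/-- **Rado's theorem**: the set of vectors majorized by `x` is the convex hull of
the orbit of `x` under the symmetric group. -/
theorem rado_majorization_convexHull {n : ℕ} (x : Fin n → ℝ) :
    {y : Fin n → ℝ | IsMajorizedBy y x} =
      convexHull ℝ {z : Fin n → ℝ | ∃ σ : Equiv.Perm (Fin n), z = x ∘ σ} := by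
  classical
  apply Set.Subset.antisymm
  · -- hard direction
    intro y hy
    by_contra hnot
    have hfin : ({z : Fin n → ℝ | ∃ σ : Equiv.Perm (Fin n), z = x ∘ σ}).Finite := by
      have : {z : Fin n → ℝ | ∃ σ : Equiv.Perm (Fin n), z = x ∘ σ}
          = Set.range (fun σ : Equiv.Perm (Fin n) => x ∘ σ) := by
        ext z
        simp [eq_comm, Set.range]
      rw [this]
      exact Set.finite_range _
    have hcl : IsClosed (convexHull ℝ {z : Fin n → ℝ | ∃ σ : Equiv.Perm (Fin n), z = x ∘ σ}) :=
      (hfin.isCompact_convexHull (𝕜 := ℝ)).isClosed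
    obtain ⟨f, u, hfu, huy⟩ :=
      geometric_hahn_banach_closed_point (convex_convexHull ℝ _) hcl hnot
    set c : Fin n → ℝ := fun i => f (fun j => if i = j then (1 : ℝ) else 0) with hc
    have hrep : ∀ z : Fin n → ℝ, f z = ∑ i, z i * c i := by
      intro z
      conv_lhs => rw [pi_eq_sum_univ z, map_sum]
      apply Finset.sum_congr rfl
      intro i _
      rw [map_smul, smul_eq_mul]
    obtain ⟨σ, hσ⟩ := rado_key_ineq hy c
    have h1 : f y ≤ f (x ∘ σ) := by
      rw [hrep y, hrep (x ∘ σ)]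
      calc ∑ i, y i * c i = ∑ i, c i * y i := by simp [mul_comm]
        _ ≤ ∑ i, c i * x (σ i) := hσ
        _ = ∑ i, (x ∘ σ) i * c i := by simp [mul_comm, Function.comp]
    have h2 : f (x ∘ σ) < u :=
      hfu _ (subset_convexHull ℝ _ ⟨σ, rfl⟩)
    linarith
  · -- easy direction
    apply convexHull_min
    · rintro z ⟨σ, rfl⟩
      constructor
      · intro S
        refine ⟨S.image σ, Finset.card_image_of_injective _ σ.injective, le_of_eq ?_⟩
        rw [Finset.sum_image (fun a _ b _ hab => σ.injective hab)]
        rfl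
      · simpa using Equiv.sum_comp σ x
    · intro y1 hy1 y2 hy2 a b ha hb hab
      have hsum : ∀ w : Fin n → ℝ, ∀ S : Finset (Fin n),
          ∑ i ∈ S, (a • y1 + b • y2) i = a * ∑ i ∈ S, y1 i + b * ∑ i ∈ S, y2 i := by
        intro w S
        simp [Finset.sum_add_distrib, Finset.mul_sum]
      constructor
      · intro S
        obtain ⟨T1, hT1c, hT1⟩ := hy1.1 S
        obtain ⟨T2, hT2c, hT2⟩ := hy2.1 S
        rcases le_total (∑ i ∈ T1, x i) (∑ i ∈ T2, x i) with hc | hc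
        · refine ⟨T2, hT2c, ?_⟩
          rw [hsum y1 S]
          have e1 := mul_le_mul_of_nonneg_left hT1 ha
          have e2 := mul_le_mul_of_nonneg_left hc ha
          have e3 := mul_le_mul_of_nonneg_left hT2 hb
          have e4 : a * ∑ i ∈ T2, x i + b * ∑ i ∈ T2, x i = ∑ i ∈ T2, x i := by
            rw [← add_mul, hab, one_mul]
          linarith
        · refine ⟨T1, hT1c, ?_⟩
          rw [hsum y1 S]
          have e1 := mul_le_mul_of_nonneg_left hT1 ha
          have e2 := mul_le_mul_of_nonneg_left hc hb
          have e3 := mul_le_mul_of_nonneg_left hT2 hb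
          have e4 : a * ∑ i ∈ T1, x i + b * ∑ i ∈ T1, x i = ∑ i ∈ T1, x i := by
            rw [← add_mul, hab, one_mul]
          linarith
      · rw [hsum y1 Finset.univ, hy1.2, hy2.2, ← add_mul, hab, one_mul]
end

section
/- (Density of dyadic permutations in Smeas(I) for the strong operator topology) For every Lebesgue-measure-preserving transformation S : [0,1] → [0,1] (not necessarily invertible), every f ∈ L²([0,1]), and every ε > 0, there exist m ∈ ℕ and a permutation σ of {0,…,m} such that ‖f ∘ σ̂ − f ∘ S‖_{L²([0,1])} < ε, where σ̂ is the dyadic permutation of rank m associated to σ. -/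
set_option maxHeartbeats 1000000

open MeasureTheory Set Filter

/-- The index `k` with `t ∈ I^m_k = [k/(m+1), (k+1)/(m+1))` (for `t ∈ [0,1)`). -/
noncomputable def dyadicIdx (m : ℕ) (t : ℝ) : Fin (m + 1) :=
  ⟨min ⌊t * (m + 1)⌋₊ m, Nat.lt_succ_of_le (min_le_right _ _)⟩

/-- The dyadic permutation `σ̂` of rank `m` associated to a permutation `σ` of
`{0, …, m}`: it sends `I^m_k` to `I^m_{σ(k)}` by translation. -/
noncomputable def dyadicPerm (m : ℕ) (σ : Equiv.Perm (Fin (m + 1))) (t : ℝ) : ℝ :=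
  t + ((σ (dyadicIdx m t) : ℕ) : ℝ) / (m + 1) - ((dyadicIdx m t : ℕ) : ℝ) / (m + 1)

local notation "μ₀" => volume.restrict (Set.Icc (0:ℝ) 1)

lemma dyadicIdx_eq_iff {m : ℕ} {t : ℝ} (ht : t ∈ Ico (0:ℝ) 1) (k : Fin (m+1)) :
    dyadicIdx m t = k ↔ t ∈ Ico ((k:ℝ)/(m+1)) ((k+1:ℝ)/(m+1)) := by
  have hm : (0:ℝ) < m + 1 := by positivity
  have hfl : ⌊t * (m + 1)⌋₊ ≤ m := by
    have : t * (m+1) < m + 1 := by nlinarith [ht.2]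
    have := Nat.floor_lt (by nlinarith [ht.1] : (0:ℝ) ≤ t * (m+1)) |>.mpr (by exact_mod_cast this)
    omega
  have : dyadicIdx m t = (⟨⌊t * (m + 1)⌋₊, Nat.lt_succ_of_le hfl⟩ : Fin (m+1)) := by
    simp [dyadicIdx, Fin.ext_iff, min_eq_left hfl]
  rw [this]
  constructor
  · rintro rfl
    constructor
    · rw [div_le_iff₀ hm]
      exact (Nat.floor_le (by nlinarith [ht.1])).trans_eq (by ring_nf)
    · rw [lt_div_iff₀ hm]
      have := Nat.lt_floor_add_one (t * (m+1))
      push_cast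
      nlinarith [this]
  · rintro ⟨h1, h2⟩
    have h1' : (k:ℝ) ≤ t * (m+1) := by rw [div_le_iff₀ hm] at h1; nlinarith
    have h2' : t * (m+1) < (k:ℝ) + 1 := by rw [lt_div_iff₀ hm] at h2; nlinarith
    have : ⌊t * (m + 1)⌋₊ = (k:ℕ) := by
      rw [Nat.floor_eq_iff (by nlinarith [ht.1])]
      exact ⟨by exact_mod_cast h1', by exact_mod_cast h2'⟩
    simp [Fin.ext_iff, this]

lemma dyadicIdx_mem {m : ℕ} {t : ℝ} (ht : t ∈ Ico (0:ℝ) 1) :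
    t ∈ Ico ((dyadicIdx m t : ℝ)/(m+1)) (((dyadicIdx m t : ℕ)+1:ℝ)/(m+1)) := by
  have := (dyadicIdx_eq_iff ht (dyadicIdx m t)).mp rfl
  exact_mod_cast this

lemma measurable_dyadicIdx (m : ℕ) : Measurable (dyadicIdx m) := by
  refine measurable_to_countable' (fun k => ?_)
  have : dyadicIdx m ⁻¹' {k} = {t : ℝ | min ⌊t * (m + 1)⌋₊ m = (k:ℕ)} := by
    ext t; simp [dyadicIdx, Fin.ext_iff]
  rw [this]
  exact ((measurable_id.mul_const _).nat_floor.min measurable_const)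
    (measurableSet_singleton _)

lemma measurable_comp_dyadicIdx {m : ℕ} {α : Type*} [MeasurableSpace α] (g : Fin (m+1) → α) :
    Measurable (fun t => g (dyadicIdx m t)) :=
  (measurable_from_top (f := g)).comp (measurable_dyadicIdx m)

lemma measurable_dyadicPerm (m : ℕ) (σ : Equiv.Perm (Fin (m+1))) :
    Measurable (dyadicPerm m σ) := by
  unfold dyadicPerm
  exact (measurable_id.add (measurable_comp_dyadicIdx
      (fun k => ((σ k : ℕ) : ℝ) / (m+1)))).sub
    (measurable_comp_dyadicIdx (fun k => ((k : ℕ) : ℝ) / (m+1)))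

/-- The dyadic interval `I^m_k` as a set. -/
def dI (m : ℕ) (k : Fin (m+1)) : Set ℝ := Ico ((k:ℝ)/(m+1)) ((k+1:ℝ)/(m+1))

lemma dI_subset_Ico {m : ℕ} (k : Fin (m+1)) : dI m k ⊆ Ico (0:ℝ) 1 := by
  have hm : (0:ℝ) < m + 1 := by positivity
  intro t ht
  refine ⟨le_trans (by positivity) ht.1, lt_of_lt_of_le ht.2 ?_⟩
  rw [div_le_one hm]
  have : (k:ℕ) + 1 ≤ m + 1 := k.2
  exact_mod_cast this

lemma iUnion_dI (m : ℕ) : (⋃ k : Fin (m+1), dI m k) = Ico (0:ℝ) 1 := by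
  apply subset_antisymm
  · exact iUnion_subset fun k => dI_subset_Ico k
  · intro t ht
    exact mem_iUnion.mpr ⟨dyadicIdx m t, by
      have := (dyadicIdx_eq_iff ht (dyadicIdx m t)).mp rfl
      simpa [dI] using this⟩

lemma pairwise_disjoint_dI (m : ℕ) : Pairwise (Function.onFun Disjoint (dI m ·)) := by
  intro k l hkl
  simp only [Function.onFun]
  rw [Set.disjoint_left]
  intro t htk htl
  have h1 := (dyadicIdx_eq_iff (dI_subset_Ico k htk) k).mpr htk
  have h2 := (dyadicIdx_eq_iff (dI_subset_Ico l htl) l).mpr htl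
  exact hkl (h1 ▸ h2 ▸ rfl)

lemma dyadicIdx_eq_of_mem_dI {m : ℕ} {t : ℝ} {k : Fin (m+1)} (ht : t ∈ dI m k) :
    dyadicIdx m t = k := (dyadicIdx_eq_iff (dI_subset_Ico k ht) k).mpr ht

lemma dyadicPerm_eq_of_mem_dI {m : ℕ} {σ : Equiv.Perm (Fin (m+1))} {t : ℝ} {k : Fin (m+1)}
    (ht : t ∈ dI m k) :
    dyadicPerm m σ t = t + (((σ k : ℕ) : ℝ) - (k : ℕ)) / (m+1) := by
  rw [dyadicPerm, dyadicIdx_eq_of_mem_dI ht]; ring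

lemma add_mem_dI_iff {m : ℕ} (k l : Fin (m+1)) {t : ℝ} :
    t + (((l:ℕ):ℝ) - (k:ℕ)) / (m+1) ∈ dI m l ↔ t ∈ dI m k := by
  have hm : (0:ℝ) < m + 1 := by positivity
  have e1 : (((l:ℕ):ℝ) - ((k:ℕ):ℝ))/(m+1) = ((l:ℕ):ℝ)/(m+1) - ((k:ℕ):ℝ)/(m+1) := by ring
  have e2 : (((l:ℕ):ℝ)+1)/(m+1) = ((l:ℕ):ℝ)/(m+1) + 1/(m+1) := by ring
  have e3 : (((k:ℕ):ℝ)+1)/(m+1) = ((k:ℕ):ℝ)/(m+1) + 1/(m+1) := by ring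
  simp only [dI, mem_Ico]
  rw [e1, e2, e3]
  constructor <;> intro h <;> exact ⟨by linarith [h.1], by linarith [h.2]⟩

lemma dyadicPerm_mem_dI {m : ℕ} {σ : Equiv.Perm (Fin (m+1))} {t : ℝ} {k : Fin (m+1)}
    (ht : t ∈ dI m k) : dyadicPerm m σ t ∈ dI m (σ k) := by
  rw [dyadicPerm_eq_of_mem_dI ht, add_mem_dI_iff k (σ k)]; exact ht

lemma volume_inter_Icc_eq_Ico (X : Set ℝ) :
    volume (X ∩ Icc (0:ℝ) 1) = volume (X ∩ Ico (0:ℝ) 1) :=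
  measure_congr (Filter.EventuallyEq.inter (ae_eq_refl X) Ico_ae_eq_Icc.symm)

theorem measurePreserving_dyadicPerm (m : ℕ) (σ : Equiv.Perm (Fin (m+1))) :
    MeasurePreserving (dyadicPerm m σ) (volume.restrict (Icc (0:ℝ) 1))
      (volume.restrict (Icc (0:ℝ) 1)) := by
  refine ⟨measurable_dyadicPerm m σ, ?_⟩
  refine Measure.ext fun A hA => ?_
  rw [Measure.map_apply (measurable_dyadicPerm m σ) hA, Measure.restrict_apply hA,
    Measure.restrict_apply (measurable_dyadicPerm m σ hA)]
  rw [volume_inter_Icc_eq_Ico, volume_inter_Icc_eq_Ico, ← iUnion_dI m,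
    inter_iUnion, inter_iUnion, measure_iUnion, measure_iUnion]
  · -- sums equal
    have key : ∀ k : Fin (m+1), volume (dyadicPerm m σ ⁻¹' A ∩ dI m k) = volume (A ∩ dI m (σ k)) := by
      intro k
      have hset : dyadicPerm m σ ⁻¹' A ∩ dI m k
          = (fun t => t + (((σ k : ℕ):ℝ) - (k:ℕ)) / (m+1)) ⁻¹' (A ∩ dI m (σ k)) := by
        ext t
        simp only [mem_inter_iff, mem_preimage]
        constructor
        · rintro ⟨htA, htk⟩
          rw [← dyadicPerm_eq_of_mem_dI htk]
          exact ⟨htA, dyadicPerm_mem_dI htk⟩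
        · rintro ⟨htA, htl⟩
          have htk : t ∈ dI m k := (add_mem_dI_iff k (σ k)).mp htl
          exact ⟨by rwa [dyadicPerm_eq_of_mem_dI htk], htk⟩
      rw [hset]
      exact measure_preimage_add_right volume _ _
    rw [tsum_fintype, tsum_fintype]
    simp_rw [key]
    exact Equiv.sum_comp σ (fun k => volume (A ∩ dI m k))
  · exact fun i j hij => (pairwise_disjoint_dI m hij).mono inter_subset_right inter_subset_right
  · exact fun k => hA.inter measurableSet_Ico
  · exact fun i j hij => (pairwise_disjoint_dI m hij).mono inter_subset_right inter_subset_right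
  · exact fun k => (measurable_dyadicPerm m σ hA).inter measurableSet_Ico

lemma volume_dI (m : ℕ) (k : Fin (m+1)) : volume (dI m k) = ENNReal.ofReal (1/(m+1)) := by
  rw [dI, Real.volume_Ico]
  congr 1
  ring

lemma measurableSet_dI (m : ℕ) (k : Fin (m+1)) : MeasurableSet (dI m k) := measurableSet_Ico

/-- If `m + 1 = (n+1) * N` then `I^m_j ⊆ I^n_{j/N}`, so the `n`-dyadic index of any
point of `I^m_j` is `j / N`. -/
lemma dyadicIdx_of_mem_dI {n N m : ℕ} (hN : 0 < N) (hm : m + 1 = (n+1) * N)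
    {j : Fin (m+1)} {t : ℝ} (ht : t ∈ dI m j) :
    dyadicIdx n t = ⟨(j:ℕ)/N, by
      rw [Nat.div_lt_iff_lt_mul hN]; have := j.2; omega⟩ := by
  set q := (j:ℕ)/N with hq
  have h1 : q * N ≤ (j:ℕ) := Nat.div_mul_le_self _ _
  have h2 : (j:ℕ) < (q+1) * N := by
    have hmod := Nat.div_add_mod (j:ℕ) N
    have hlt := Nat.mod_lt (j:ℕ) hN
    calc (j:ℕ) = N*q + (j:ℕ)%N := by rw [hq]; omega
      _ < N*q + N := by omega
      _ = (q+1)*N := by ring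
  have hmr : ((m:ℝ)+1) = ((n:ℝ)+1)*(N:ℝ) := by exact_mod_cast hm
  have hNr : (0:ℝ) < N := by exact_mod_cast hN
  have hmr' : (0:ℝ) < (m:ℝ)+1 := by positivity
  have hnr : (0:ℝ) < (n:ℝ)+1 := by positivity
  rw [dyadicIdx_eq_iff (dI_subset_Ico j ht)]
  simp only [mem_Ico] at ht ⊢
  constructor
  · calc ((q:ℝ))/((n:ℝ)+1) = ((q:ℝ)*N)/((m:ℝ)+1) := by
          rw [hmr]; field_simp
      _ ≤ ((j:ℕ):ℝ)/((m:ℝ)+1) := by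
          gcongr
          exact_mod_cast h1
      _ ≤ t := ht.1
  · calc t < (((j:ℕ):ℝ)+1)/((m:ℝ)+1) := ht.2
      _ ≤ (((q:ℝ)+1)*N)/((m:ℝ)+1) := by
          gcongr
          have : ((j:ℕ):ℝ) + 1 ≤ ((q+1)*N : ℕ) := by exact_mod_cast h2
          push_cast at this ⊢
          linarith
      _ = ((q:ℝ)+1)/((n:ℝ)+1) := by rw [hmr]; field_simp

/-- The set of `m`-indices lying above the `n`-index `k`. -/
noncomputable def dyadicBlock (n N m : ℕ) (k : Fin (n+1)) : Finset (Fin (m+1)) :=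
  Finset.univ.filter (fun j => (j:ℕ)/N = (k:ℕ))

lemma card_dyadicBlock {n N m : ℕ} (hN : 0 < N) (hm : m + 1 = (n+1) * N) (k : Fin (n+1)) :
    (dyadicBlock n N m k).card = N := by
  classical
  have hinj : Function.Injective (fun i : Fin N => (⟨(k:ℕ)*N + (i:ℕ), by
        have hk := k.2
        have hi := i.2
        calc (k:ℕ)*N + (i:ℕ) < (k:ℕ)*N + N := by omega
          _ = ((k:ℕ)+1)*N := by ring
          _ ≤ (n+1)*N := Nat.mul_le_mul_right N (by omega)
          _ = m + 1 := hm.symm⟩ : Fin (m+1))) := by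
    intro a b hab
    have : (k:ℕ)*N + (a:ℕ) = (k:ℕ)*N + (b:ℕ) := congrArg Fin.val hab
    exact Fin.ext (by omega)
  have himg : dyadicBlock n N m k = Finset.image
      (fun i : Fin N => (⟨(k:ℕ)*N + (i:ℕ), by
        have hk := k.2
        have hi := i.2
        calc (k:ℕ)*N + (i:ℕ) < (k:ℕ)*N + N := by omega
          _ = ((k:ℕ)+1)*N := by ring
          _ ≤ (n+1)*N := Nat.mul_le_mul_right N (by omega)
          _ = m + 1 := hm.symm⟩ : Fin (m+1))) Finset.univ := by
    ext j
    simp only [dyadicBlock, Finset.mem_filter, Finset.mem_univ, true_and, Finset.mem_image]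
    constructor
    · intro hj
      refine ⟨⟨(j:ℕ) % N, Nat.mod_lt _ hN⟩, ?_⟩
      apply Fin.ext
      show (k:ℕ)*N + (j:ℕ)%N = (j:ℕ)
      have h := Nat.div_add_mod (j:ℕ) N
      rw [hj] at h
      rw [mul_comm]
      exact h
    · rintro ⟨i, -, rfl⟩
      show ((k:ℕ)*N + (i:ℕ))/N = (k:ℕ)
      rw [mul_comm, Nat.mul_add_div hN, Nat.div_eq_of_lt i.2]
      omega
  rw [himg, Finset.card_image_of_injective _ hinj, Finset.card_univ, Fintype.card_fin]

lemma dyadicBlock_disjoint {n N m : ℕ} {k l : Fin (n+1)} (hkl : k ≠ l) :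
    Disjoint (dyadicBlock n N m k) (dyadicBlock n N m l) := by
  classical
  rw [Finset.disjoint_left]
  intro j hj hj'
  simp only [dyadicBlock, Finset.mem_filter] at hj hj'
  exact hkl (Fin.ext (hj.2 ▸ hj'.2 ▸ rfl))

lemma mu0_univ : μ₀ Set.univ = 1 := by
  simp [Real.volume_Icc]

/-- For `t ∈ [0,1]`, `t` is within `1/(n+1)` of `(dyadicIdx n t)/(n+1)`. -/
lemma dyadicIdx_dist {n : ℕ} {t : ℝ} (ht : t ∈ Icc (0:ℝ) 1) :
    |t - ((dyadicIdx n t : ℕ) : ℝ)/(n+1)| ≤ 1/(n+1) := by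
  have hm : (0:ℝ) < n + 1 := by positivity
  have hpos : (0:ℝ) < 1/(n+1) := by positivity
  rcases lt_or_eq_of_le ht.2 with h1 | rfl
  · have hmem := (dyadicIdx_eq_iff ⟨ht.1, h1⟩ (dyadicIdx n t)).mp rfl
    have e : (((dyadicIdx n t : ℕ):ℝ)+1)/(n+1) = ((dyadicIdx n t : ℕ):ℝ)/(n+1) + 1/(n+1) := by
      ring
    have h2 := hmem.2
    rw [e] at h2
    have h3 := hmem.1
    rw [abs_le]
    exact ⟨by linarith, by linarith⟩
  · have hidx : ((dyadicIdx n 1 : Fin (n+1)) : ℕ) = n := by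
      show min ⌊(1:ℝ) * (n+1)⌋₊ n = n
      have : ⌊(1:ℝ) * (n+1)⌋₊ = n + 1 := by
        rw [one_mul]
        have : ((n:ℝ)+1) = ((n+1:ℕ):ℝ) := by push_cast; ring
        rw [this, Nat.floor_natCast]
      omega
    rw [hidx]
    have : (1:ℝ) - (n:ℝ)/(n+1) = 1/(n+1) := by field_simp; ring
    rw [this, abs_of_pos hpos]

/-- Approximation of an L² function by a dyadic step function. -/
lemma exists_step_approx (f : ℝ → ℝ) (hf : MemLp f 2 μ₀) {η : ℝ} (hη : 0 < η) :
    ∃ (n : ℕ) (c : Fin (n+1) → ℝ),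
      eLpNorm (fun t => f t - c (dyadicIdx n t)) 2 μ₀ < ENNReal.ofReal η := by
  set f' : ℝ → ℝ := (Icc (0:ℝ) 1).indicator f with hf'def
  have hf' : MemLp f' 2 volume := (memLp_indicator_iff_restrict measurableSet_Icc).mpr hf
  obtain ⟨g, hgsupp, hgapprox, hgcont, -⟩ :=
    hf'.exists_hasCompactSupport_eLpNorm_sub_le (by norm_num)
      (ε := ENNReal.ofReal (η/4)) (by simp [hη, ne_of_gt])
  have hgu : UniformContinuous g := hgsupp.uniformContinuous_of_continuous hgcont
  obtain ⟨δ, hδpos, hδ⟩ := Metric.uniformContinuous_iff.mp hgu (η/4) (by linarith)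
  obtain ⟨n, hn⟩ := exists_nat_one_div_lt (by linarith : (0:ℝ) < δ / 2)
  refine ⟨n, fun k => g ((k:ℝ)/(n+1)), ?_⟩
  have hstep_meas : Measurable (fun t => g (((dyadicIdx n t : ℕ):ℝ)/(n+1))) :=
    measurable_comp_dyadicIdx (fun k => g ((k:ℝ)/(n+1)))
  -- f = f' a.e. on μ₀
  have hae : f =ᵐ[μ₀] f' := by
    refine (ae_restrict_iff' measurableSet_Icc).mpr (ae_of_all _ fun t ht => ?_)
    simp [hf'def, indicator_of_mem ht]
  have key : eLpNorm (fun t => f t - g (((dyadicIdx n t : ℕ):ℝ)/(n+1))) 2 μ₀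
      ≤ ENNReal.ofReal (η/4) + ENNReal.ofReal (η/4) := by
    have heq : (fun t => f t - g (((dyadicIdx n t : ℕ):ℝ)/(n+1)))
        =ᵐ[μ₀] (fun t => (f' t - g t) + (g t - g (((dyadicIdx n t : ℕ):ℝ)/(n+1)))) := by
      filter_upwards [hae] with t ht
      rw [ht]; ring
    rw [eLpNorm_congr_ae heq]
    refine le_trans (eLpNorm_add_le ?_ ?_ (by norm_num)) ?_
    · exact ((hf'.aestronglyMeasurable.sub hgcont.aestronglyMeasurable).restrict)
    · exact (hgcont.measurable.sub hstep_meas).aestronglyMeasurable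
    gcongr
    · calc eLpNorm (fun t => f' t - g t) 2 μ₀ ≤ eLpNorm (f' - g) 2 volume := by
            exact eLpNorm_mono_measure _ Measure.restrict_le_self
        _ ≤ ENNReal.ofReal (η/4) := hgapprox
    · refine le_trans (eLpNorm_le_of_ae_bound (C := η/4) ?_) ?_
      · refine (ae_restrict_iff' measurableSet_Icc).mpr (ae_of_all _ fun t ht => ?_)
        have hdist : dist t (((dyadicIdx n t : ℕ):ℝ)/(n+1)) < δ := by
          rw [Real.dist_eq]
          calc |t - ((dyadicIdx n t : ℕ):ℝ)/(n+1)| ≤ 1/(n+1) := dyadicIdx_dist ht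
            _ < δ := by linarith
        have := hδ hdist
        rw [Real.dist_eq] at this
        rw [Real.norm_eq_abs]
        exact le_of_lt this
      · rw [mu0_univ, ENNReal.one_rpow, one_mul]
  calc eLpNorm (fun t => f t - g (((dyadicIdx n t : ℕ):ℝ)/(n+1))) 2 μ₀
      ≤ ENNReal.ofReal (η/4) + ENNReal.ofReal (η/4) := key
    _ < ENNReal.ofReal η := by
        rw [← ENNReal.ofReal_add (by linarith) (by linarith)]
        exact ENNReal.ofReal_lt_ofReal_iff_of_nonneg (by linarith) |>.mpr (by linarith)

lemma exists_perm_extend {α : Type*} [Fintype α] [DecidableEq α] (T : Finset α) (g : α → α)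
    (hg : Set.InjOn g ↑T) : ∃ σ : Equiv.Perm α, ∀ j ∈ T, σ j = g j := by
  classical
  have himg : (T.image g).card = T.card := Finset.card_image_of_injOn hg
  have hcompl : (Tᶜ : Finset α).card = ((T.image g)ᶜ : Finset α).card := by
    simp [Finset.card_compl, himg]
  let e := Finset.equivOfCardEq hcompl
  let h : α → α := fun a => if ha : a ∈ T then g a else (e ⟨a, Finset.mem_compl.mpr ha⟩ : α)
  have hinj : Function.Injective h := by
    intro a b hab
    by_cases haT : a ∈ T <;> by_cases hbT : b ∈ T <;> simp only [h, dif_pos, dif_neg, haT, hbT] at hab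
    · exact hg haT hbT hab
    · exfalso
      have h1 : g a ∈ T.image g := Finset.mem_image_of_mem g haT
      rw [dif_neg not_false] at hab
      have h2 := (e ⟨b, Finset.mem_compl.mpr hbT⟩).2
      rw [← hab] at h2
      exact (Finset.mem_compl.mp h2) h1
    · exfalso
      have h1 : g b ∈ T.image g := Finset.mem_image_of_mem g hbT
      rw [dif_neg not_false] at hab
      have h2 := (e ⟨a, Finset.mem_compl.mpr haT⟩).2
      rw [hab] at h2
      exact (Finset.mem_compl.mp h2) h1
    · have := e.injective (Subtype.coe_injective hab)
      exact Subtype.mk_eq_mk.mp this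
  refine ⟨Equiv.ofBijective h (Finite.injective_iff_bijective.mp hinj), fun j hj => ?_⟩
  simp only [Equiv.ofBijective_apply, h, dif_pos hj]

lemma glue_inj {α ι : Type*} [DecidableEq α] [DecidableEq ι] (s : Finset ι)
    (T B : ι → Finset α)
    (hT : ∀ k ∈ s, ∀ l ∈ s, k ≠ l → Disjoint (T k) (T l))
    (hB : ∀ k ∈ s, ∀ l ∈ s, k ≠ l → Disjoint (B k) (B l))
    (hcard : ∀ k ∈ s, (T k).card ≤ (B k).card) :
    ∃ g : α → α, Set.InjOn g ↑(s.biUnion T) ∧ ∀ k ∈ s, ∀ j ∈ T k, g j ∈ B k := by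
  classical
  induction s using Finset.induction_on with
  | empty => exact ⟨id, by simp, by simp⟩
  | @insert k₀ s' hk₀ ih =>
    obtain ⟨g', hg'inj, hg'mem⟩ := ih
      (fun k hk l hl => hT k (Finset.mem_insert_of_mem hk) l (Finset.mem_insert_of_mem hl))
      (fun k hk l hl => hB k (Finset.mem_insert_of_mem hk) l (Finset.mem_insert_of_mem hl))
      (fun k hk => hcard k (Finset.mem_insert_of_mem hk))
    obtain ⟨B', hB'sub, hB'card⟩ := Finset.exists_subset_card_eq
      (hcard k₀ (Finset.mem_insert_self _ _))
    let e : {x // x ∈ T k₀} ≃ {x // x ∈ B'} := Finset.equivOfCardEq hB'card.symm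
    refine ⟨fun a => if ha : a ∈ T k₀ then (e ⟨a, ha⟩ : α) else g' a, ?_, ?_⟩
    · intro a ha b hb hab
      simp only [Finset.coe_biUnion, Finset.mem_coe, mem_iUnion] at ha hb
      obtain ⟨ka, hka, haT⟩ := ha
      obtain ⟨kb, hkb, hbT⟩ := hb
      by_cases haT0 : a ∈ T k₀ <;> by_cases hbT0 : b ∈ T k₀ <;>
        simp only [dif_pos, dif_neg, haT0, hbT0] at hab
      · exact Subtype.mk_eq_mk.mp (e.injective (Subtype.coe_injective hab))
      · exfalso
        have hkb' : kb ∈ s' := by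
          rcases Finset.mem_insert.mp hkb with rfl | h
          · exact absurd hbT hbT0
          · exact h
        have h1 : (e ⟨a, haT0⟩ : α) ∈ B k₀ := hB'sub (e ⟨a, haT0⟩).2
        have h2 : g' b ∈ B kb := hg'mem kb hkb' b hbT
        rw [hab] at h1
        have hne : k₀ ≠ kb := fun h => hk₀ (h ▸ hkb')
        exact Finset.disjoint_left.mp (hB k₀ (Finset.mem_insert_self _ _) kb
          (Finset.mem_insert_of_mem hkb') hne) h1 h2
      · exfalso
        have hka' : ka ∈ s' := by
          rcases Finset.mem_insert.mp hka with rfl | h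
          · exact absurd haT haT0
          · exact h
        have h1 : (e ⟨b, hbT0⟩ : α) ∈ B k₀ := hB'sub (e ⟨b, hbT0⟩).2
        have h2 : g' a ∈ B ka := hg'mem ka hka' a haT
        rw [← hab] at h1
        have hne : k₀ ≠ ka := fun h => hk₀ (h ▸ hka')
        exact Finset.disjoint_left.mp (hB k₀ (Finset.mem_insert_self _ _) ka
          (Finset.mem_insert_of_mem hka') hne) h1 h2
      · have hka' : ka ∈ s' := by
          rcases Finset.mem_insert.mp hka with rfl | h
          · exact absurd haT haT0
          · exact h
        have hkb' : kb ∈ s' := by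
          rcases Finset.mem_insert.mp hkb with rfl | h
          · exact absurd hbT hbT0
          · exact h
        refine hg'inj ?_ ?_ hab
        · simp only [Finset.coe_biUnion, Finset.mem_coe, mem_iUnion]
          exact ⟨ka, hka', haT⟩
        · simp only [Finset.coe_biUnion, Finset.mem_coe, mem_iUnion]
          exact ⟨kb, hkb', hbT⟩
    · intro k hk j hj
      rcases Finset.mem_insert.mp hk with rfl | hk'
      · simp only [dif_pos hj]
        exact hB'sub (e ⟨j, hj⟩).2
      · have hjT0 : j ∉ T k₀ := by
          intro hjT0
          have hne : k₀ ≠ k := fun h => hk₀ (h ▸ hk')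
          exact Finset.disjoint_left.mp (hT k₀ (Finset.mem_insert_self _ _) k
            (Finset.mem_insert_of_mem hk') hne) hjT0 hj
        simp only [dif_neg hjT0]
        exact hg'mem k hk' j hj

lemma key_assignment {n : ℕ} (A : Fin (n+1) → Set ℝ)
    (hAmeas : ∀ k, MeasurableSet (A k))
    (hAsub : ∀ k, A k ⊆ Ico (0:ℝ) 1)
    (hAdisj : ∀ k l : Fin (n+1), k ≠ l → Disjoint (A k) (A l))
    (hAvol : ∀ k, ENNReal.ofReal (1/((n:ℝ)+1)) ≤ volume (A k))
    {δ : ℝ} (hδ : 0 < δ) :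
    ∃ (m : ℕ) (σ : Equiv.Perm (Fin (m+1))),
      volume {t | t ∈ Ico (0:ℝ) 1 ∧ t ∉ A (dyadicIdx n (dyadicPerm m σ t))}
        < ENNReal.ofReal δ := by
  classical
  set c : ℝ := ((n:ℝ)+1) * (2*(n:ℝ)+2) + 1 with hc
  have hcpos : (0:ℝ) < c := by positivity
  set δ' : ℝ := δ / c with hδ'def
  have hδ' : (0:ℝ) < δ' := by positivity
  -- inner regular compacts
  have hKex : ∀ k, ∃ K, K ⊆ A k ∧ IsCompact K ∧ volume (A k \ K) < ENNReal.ofReal δ' := by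
    intro k
    refine (hAmeas k).exists_isCompact_diff_lt ?_ (ENNReal.ofReal_pos.mpr hδ').ne'
    refine ne_top_of_le_ne_top ?_ (measure_mono (hAsub k))
    simp [Real.volume_Ico]
  choose K hKsub hKcomp hKvol using hKex
  -- choose the rank m
  have hthick : ∀ k, Tendsto (fun r : ℝ => volume (Metric.cthickening r (K k)))
      (nhds 0) (nhds (volume (K k))) :=
    fun k => tendsto_measure_cthickening_of_isCompact (hKcomp k)
  have hseq : Tendsto (fun s : ℕ => 1/((((n+1)*(s+1) : ℕ)) : ℝ)) atTop (nhds 0) := by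
    have h1 : Tendsto (fun s : ℕ => ((n+1)*(s+1) : ℕ)) atTop atTop := by
      refine tendsto_atTop_mono (fun s => ?_) tendsto_id
      show s ≤ (n+1)*(s+1)
      calc s ≤ 1 * (s+1) := by omega
        _ ≤ (n+1)*(s+1) := Nat.mul_le_mul_right _ (by omega)
    exact tendsto_one_div_atTop_nhds_zero_nat.comp h1
  have hev : ∀ᶠ s : ℕ in atTop, ∀ k,
      volume (Metric.cthickening (1/((((n+1)*(s+1) : ℕ)) : ℝ)) (K k))
        < volume (K k) + ENNReal.ofReal δ' := by
    rw [eventually_all]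
    intro k
    have hlt : volume (K k) < volume (K k) + ENNReal.ofReal δ' :=
      ENNReal.lt_add_right (hKcomp k).measure_lt_top.ne (ENNReal.ofReal_pos.mpr hδ').ne'
    exact ((hthick k).comp hseq).eventually_lt_const hlt
  obtain ⟨s, hs⟩ := hev.exists
  set N : ℕ := s + 1 with hNdef
  have hN : 0 < N := Nat.succ_pos s
  set m : ℕ := (n+1)*N - 1 with hmdef
  have hm : m + 1 = (n+1) * N := by
    have hpos : 0 < (n+1)*N := Nat.mul_pos (Nat.succ_pos n) hN
    omega
  set r : ℝ := 1/((m:ℝ)+1) with hrdef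
  have hrpos : (0:ℝ) < r := by positivity
  have hreq : r = 1/((((n+1)*(s+1) : ℕ)) : ℝ) := by
    rw [hrdef]
    congr 1
    rw [show ((m:ℝ)+1) = ((m+1 : ℕ) : ℝ) by push_cast; ring, hm]
  have hcth : ∀ k, volume (Metric.cthickening r (K k)) < volume (K k) + ENNReal.ofReal δ' := by
    rw [hreq]; exact hs
  -- the index sets
  set J : Fin (n+1) → Finset (Fin (m+1)) :=
    fun k => Finset.univ.filter (fun j => (dI m j ∩ K k).Nonempty) with hJdef
  set J' : Fin (n+1) → Finset (Fin (m+1)) :=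
    fun k => J k \ ((Finset.univ.filter (· < k)).biUnion J) with hJ'def
  have hTex : ∀ k, ∃ T ⊆ J' k, T.card = min (J' k).card N :=
    fun k => Finset.exists_subset_card_eq (min_le_left _ _)
  choose T hTsub hTcard using hTex
  have hTJ : ∀ k, T k ⊆ J k := fun k => (hTsub k).trans (Finset.sdiff_subset)
  have hTdisj : ∀ k l : Fin (n+1), k ≠ l → Disjoint (T k) (T l) := by
    have hJ'J : ∀ {k l : Fin (n+1)}, k < l → Disjoint (J k) (J' l) := by
      intro k l hkl
      rw [Finset.disjoint_left]
      intro j hj hj'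
      rw [hJ'def] at hj'
      exact (Finset.mem_sdiff.mp hj').2 (Finset.mem_biUnion.mpr
        ⟨k, Finset.mem_filter.mpr ⟨Finset.mem_univ _, hkl⟩, hj⟩)
    intro k l hkl
    rcases lt_or_gt_of_ne hkl with h | h
    · exact Finset.disjoint_of_subset_left (hTJ k)
        (Finset.disjoint_of_subset_right (hTsub l) (hJ'J h))
    · exact Finset.disjoint_of_subset_right (hTJ l)
        ((Finset.disjoint_of_subset_right (hTsub k) (hJ'J h)).symm)
  -- the permutation
  obtain ⟨g, hginj, hgmem⟩ := glue_inj Finset.univ T (dyadicBlock n N m)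
    (fun k _ l _ h => hTdisj k l h)
    (fun k _ l _ h => dyadicBlock_disjoint h)
    (fun k _ => by rw [hTcard k, card_dyadicBlock hN hm]; exact min_le_right _ _)
  obtain ⟨σ, hσ⟩ := exists_perm_extend _ g hginj
  have hσT : ∀ k : Fin (n+1), ∀ j ∈ T k, ((σ j : ℕ))/N = (k:ℕ) := by
    intro k j hj
    have hjU : j ∈ Finset.univ.biUnion T := Finset.mem_biUnion.mpr ⟨k, Finset.mem_univ _, hj⟩
    rw [hσ j hjU]
    have := hgmem k (Finset.mem_univ _) j hj
    exact (Finset.mem_filter.mp this).2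
  refine ⟨m, σ, ?_⟩
  -- the dyadic unions
  set W : Fin (n+1) → Set ℝ := fun k => ⋃ j ∈ T k, dI m j with hWdef
  have hWidx : ∀ k : Fin (n+1), ∀ t ∈ W k, dyadicIdx n (dyadicPerm m σ t) = k := by
    intro k t ht
    rw [hWdef] at ht
    simp only [mem_iUnion] at ht
    obtain ⟨j, hjT, htj⟩ := ht
    have h1 : dyadicPerm m σ t ∈ dI m (σ j) := dyadicPerm_mem_dI htj
    have h2 := dyadicIdx_of_mem_dI hN hm h1
    rw [h2]
    exact Fin.ext (hσT k j hjT)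
  -- geometric facts
  have hJcth : ∀ k : Fin (n+1), ∀ j ∈ J k, dI m j ⊆ Metric.cthickening r (K k) := by
    intro k j hj x hx
    obtain ⟨y, hy⟩ := (Finset.mem_filter.mp hj).2
    refine Metric.mem_cthickening_of_dist_le x y r (K k) hy.2 ?_
    have h1 := hx
    have h2 := hy.1
    simp only [dI, mem_Ico] at h1 h2
    have he : (((j:ℕ):ℝ)+1)/((m:ℝ)+1) = ((j:ℕ):ℝ)/((m:ℝ)+1) + r := by rw [hrdef]; ring
    rw [Real.dist_eq, abs_sub_le_iff]
    constructor <;> [linarith [h1.1, h1.2, h2.1, h2.2]; linarith [h1.1, h1.2, h2.1, h2.2]]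
  have hKcover : ∀ k : Fin (n+1), K k ⊆ ⋃ j ∈ J k, dI m j := by
    intro k t ht
    have htIco : t ∈ Ico (0:ℝ) 1 := hAsub k (hKsub k ht)
    have hmem : t ∈ dI m (dyadicIdx m t) := by
      have := (dyadicIdx_eq_iff htIco (dyadicIdx m t)).mp rfl
      simpa [dI] using this
    refine mem_iUnion₂.mpr ⟨dyadicIdx m t, ?_, hmem⟩
    exact Finset.mem_filter.mpr ⟨Finset.mem_univ _, ⟨t, hmem, ht⟩⟩
  have hcthK : ∀ k, volume (Metric.cthickening r (K k) \ K k) < ENNReal.ofReal δ' :=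
    fun k => measure_diff_lt_of_lt_add (hKcomp k).isClosed.measurableSet.nullMeasurableSet
      (Metric.self_subset_cthickening _) (hKcomp k).measure_lt_top.ne (hcth k)
  -- volume of W k
  have hWvol : ∀ k, volume (W k) = (T k).card * ENNReal.ofReal r := by
    intro k
    rw [hWdef]
    rw [measure_biUnion_finset (fun i _ j _ hij => pairwise_disjoint_dI m hij)
      (fun j _ => measurableSet_dI m j)]
    simp_rw [volume_dI, ← hrdef]
    rw [Finset.sum_const, nsmul_eq_mul]
  have hWcth : ∀ k, W k ⊆ Metric.cthickening r (K k) := by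
    intro k
    rw [hWdef]
    exact iUnion₂_subset fun j hj => hJcth k j (hTJ k hj)
  have hWA : ∀ k, volume (W k \ A k) < ENNReal.ofReal δ' := by
    intro k
    refine lt_of_le_of_lt (measure_mono ?_) (hcthK k)
    intro x hx
    exact ⟨hWcth k hx.1, fun hxK => hx.2 (hKsub k hxK)⟩
  -- lower bound for volume of W k
  have hconst : (n:ENNReal) * (ENNReal.ofReal δ' + ENNReal.ofReal δ') + ENNReal.ofReal δ'
      = ENNReal.ofReal ((2*(n:ℝ)+1) * δ') := by
    rw [← ENNReal.ofReal_add hδ'.le hδ'.le, ← ENNReal.ofReal_natCast n,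
      ← ENNReal.ofReal_mul (by positivity), ← ENNReal.ofReal_add (by positivity) hδ'.le]
    congr 1
    ring
  have hWlow : ∀ k, ENNReal.ofReal (1/((n:ℝ)+1))
      ≤ volume (W k) + ENNReal.ofReal ((2*(n:ℝ)+1) * δ') := by
    intro k
    rcases le_or_gt N (J' k).card with hcase | hcase
    · have hNr : volume (W k) = ENNReal.ofReal (1/((n:ℝ)+1)) := by
        rw [hWvol k, hTcard k, min_eq_right hcase, ← ENNReal.ofReal_natCast N,
          ← ENNReal.ofReal_mul (by positivity)]
        congr 1
        rw [hrdef]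
        have hmr : ((m:ℝ)+1) = ((n:ℝ)+1)*(N:ℝ) := by exact_mod_cast hm
        have hNr0 : (0:ℝ) < (N:ℝ) := by exact_mod_cast hN
        field_simp [hmr]
        linarith [hmr]
      rw [hNr]
      exact le_add_right le_rfl
    · have hTk : T k = J' k := Finset.eq_of_subset_of_card_le (hTsub k)
        (le_of_eq ((hTcard k).trans (min_eq_left hcase.le)).symm)
      have hJW : (⋃ j ∈ J k, dI m j) ⊆ W k ∪
          ⋃ k' ∈ Finset.univ.filter (· < k), (Metric.cthickening r (K k) ∩ Metric.cthickening r (K k')) := by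
        intro t ht
        obtain ⟨j, hjJ, htj⟩ := mem_iUnion₂.mp ht
        by_cases hj' : j ∈ J' k
        · left
          rw [hWdef]
          exact mem_iUnion₂.mpr ⟨j, hTk ▸ hj', htj⟩
        · right
          have : j ∈ (Finset.univ.filter (· < k)).biUnion J := by
            rw [hJ'def] at hj'
            simp only [Finset.mem_sdiff, not_and, not_not] at hj'
            exact hj' hjJ
          obtain ⟨k', hk', hjk'⟩ := Finset.mem_biUnion.mp this
          refine mem_iUnion₂.mpr ⟨k', hk', ⟨hJcth k j hjJ htj, hJcth k' j hjk' htj⟩⟩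
      have hover : ∀ k' : Fin (n+1), k' ≠ k →
          volume (Metric.cthickening r (K k) ∩ Metric.cthickening r (K k'))
            ≤ ENNReal.ofReal δ' + ENNReal.ofReal δ' := by
        intro k' hk'
        have hdisjK : Disjoint (K k) (K k') :=
          Set.disjoint_of_subset (hKsub k) (hKsub k') (hAdisj k k' (Ne.symm hk'))
        have hsub : Metric.cthickening r (K k) ∩ Metric.cthickening r (K k') ⊆
            (Metric.cthickening r (K k) \ K k) ∪ (Metric.cthickening r (K k') \ K k') := by
          intro x hx
          by_cases hxK : x ∈ K k
          · right
            exact ⟨hx.2, fun h => (Set.disjoint_left.mp hdisjK hxK) h⟩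
          · left
            exact ⟨hx.1, hxK⟩
        calc volume _ ≤ volume ((Metric.cthickening r (K k) \ K k) ∪ (Metric.cthickening r (K k') \ K k')) := measure_mono hsub
          _ ≤ volume (Metric.cthickening r (K k) \ K k) + volume (Metric.cthickening r (K k') \ K k') := measure_union_le _ _
          _ ≤ ENNReal.ofReal δ' + ENNReal.ofReal δ' := add_le_add (hcthK k).le (hcthK k').le
      have hsum : volume (⋃ k' ∈ Finset.univ.filter (· < k),
          (Metric.cthickening r (K k) ∩ Metric.cthickening r (K k')))
            ≤ (n:ENNReal) * (ENNReal.ofReal δ' + ENNReal.ofReal δ') := by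
        refine le_trans (measure_biUnion_finset_le _ _) ?_
        have h1 : ∀ k' ∈ Finset.univ.filter (· < k),
            volume (Metric.cthickening r (K k) ∩ Metric.cthickening r (K k'))
              ≤ ENNReal.ofReal δ' + ENNReal.ofReal δ' := by
          intro k' hk'
          exact hover k' (ne_of_lt (Finset.mem_filter.mp hk').2)
        refine le_trans (Finset.sum_le_sum h1) ?_
        rw [Finset.sum_const, nsmul_eq_mul]
        refine mul_le_mul' ?_ le_rfl
        have hcard : (Finset.univ.filter (· < k)).card ≤ n := by
          have hsub2 : Finset.univ.filter (· < k) ⊆ Finset.univ.erase k := by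
            intro x hx
            exact Finset.mem_erase.mpr ⟨ne_of_lt (Finset.mem_filter.mp hx).2, Finset.mem_univ _⟩
          calc (Finset.univ.filter (· < k)).card ≤ (Finset.univ.erase k).card :=
                Finset.card_le_card hsub2
            _ = n := by
                rw [Finset.card_erase_of_mem (Finset.mem_univ _), Finset.card_univ,
                  Fintype.card_fin]
                omega
        exact_mod_cast hcard
      calc ENNReal.ofReal (1/((n:ℝ)+1)) ≤ volume (A k) := hAvol k
        _ ≤ volume (K k) + ENNReal.ofReal δ' := by
            refine le_trans (measure_mono (?_ : A k ⊆ K k ∪ (A k \ K k))) ?_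
            · intro x hx
              by_cases h : x ∈ K k
              · exact Or.inl h
              · exact Or.inr ⟨hx, h⟩
            · exact le_trans (measure_union_le _ _) (add_le_add le_rfl (hKvol k).le)
        _ ≤ volume (⋃ j ∈ J k, dI m j) + ENNReal.ofReal δ' :=
            add_le_add (measure_mono (hKcover k)) le_rfl
        _ ≤ (volume (W k) + (n:ENNReal) * (ENNReal.ofReal δ' + ENNReal.ofReal δ')) + ENNReal.ofReal δ' := by
            refine add_le_add ?_ le_rfl
            refine le_trans (measure_mono hJW) ?_
            exact le_trans (measure_union_le _ _) (add_le_add le_rfl hsum)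
        _ = volume (W k) + ENNReal.ofReal ((2*(n:ℝ)+1) * δ') := by
            rw [add_assoc, hconst]
  -- the mismatch set
  have hMsub : {t | t ∈ Ico (0:ℝ) 1 ∧ t ∉ A (dyadicIdx n (dyadicPerm m σ t))}
      ⊆ (⋃ k, (W k \ A k)) ∪ (Ico (0:ℝ) 1 \ ⋃ k, W k) := by
    intro t ht
    by_cases hW : t ∈ ⋃ k, W k
    · left
      obtain ⟨k, hk⟩ := mem_iUnion.mp hW
      refine mem_iUnion.mpr ⟨k, hk, ?_⟩
      intro hA
      exact ht.2 ((hWidx k t hk).symm ▸ hA)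
    · right
      exact ⟨ht.1, hW⟩
  have hWmeas : ∀ k, MeasurableSet (W k) := by
    intro k
    rw [hWdef]
    exact MeasurableSet.biUnion (T k).countable_toSet (fun j _ => measurableSet_dI m j)
  have hWdisjW : Pairwise (Function.onFun Disjoint W) := by
    intro k l hkl
    simp only [Function.onFun]
    rw [Set.disjoint_left]
    intro t htk htl
    rw [hWdef] at htk htl
    obtain ⟨j, hjT, htj⟩ := mem_iUnion₂.mp htk
    obtain ⟨j', hj'T, htj'⟩ := mem_iUnion₂.mp htl
    have hjj' : j ≠ j' := by
      intro h
      exact Finset.disjoint_left.mp (hTdisj k l hkl) hjT (h ▸ hj'T)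
    exact Set.disjoint_left.mp (pairwise_disjoint_dI m hjj') htj htj'
  have hWIco : (⋃ k, W k) ⊆ Ico (0:ℝ) 1 := by
    refine iUnion_subset fun k => ?_
    rw [hWdef]
    exact iUnion₂_subset fun j _ => dI_subset_Ico j
  have hsumW : ENNReal.ofReal 1 ≤ volume (⋃ k, W k)
      + ENNReal.ofReal (((n:ℝ)+1)*((2*(n:ℝ)+1)*δ')) := by
    have h1 : volume (⋃ k, W k) = ∑ k, volume (W k) := by
      rw [measure_iUnion hWdisjW hWmeas, tsum_fintype]
    have h2 : ENNReal.ofReal 1 = ∑ _k : Fin (n+1), ENNReal.ofReal (1/((n:ℝ)+1)) := by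
      rw [Finset.sum_const, Finset.card_univ, Fintype.card_fin, nsmul_eq_mul,
        ← ENNReal.ofReal_natCast (n+1), ← ENNReal.ofReal_mul (by positivity)]
      congr 1
      push_cast
      field_simp
    calc ENNReal.ofReal 1 = ∑ _k : Fin (n+1), ENNReal.ofReal (1/((n:ℝ)+1)) := h2
      _ ≤ ∑ k, (volume (W k) + ENNReal.ofReal ((2*(n:ℝ)+1)*δ')) :=
          Finset.sum_le_sum fun k _ => hWlow k
      _ = ∑ k, volume (W k) + ∑ _k : Fin (n+1), ENNReal.ofReal ((2*(n:ℝ)+1)*δ') :=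
          Finset.sum_add_distrib
      _ = volume (⋃ k, W k) + ENNReal.ofReal (((n:ℝ)+1)*((2*(n:ℝ)+1)*δ')) := by
          rw [← h1, Finset.sum_const, Finset.card_univ, Fintype.card_fin, nsmul_eq_mul,
            ← ENNReal.ofReal_natCast (n+1), ← ENNReal.ofReal_mul (by positivity)]
          norm_num
  have hrem : volume (Ico (0:ℝ) 1 \ ⋃ k, W k)
      ≤ ENNReal.ofReal (((n:ℝ)+1)*((2*(n:ℝ)+1)*δ')) := by
    rw [measure_diff hWIco (MeasurableSet.iUnion hWmeas).nullMeasurableSet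
      (ne_top_of_le_ne_top (by simp [Real.volume_Ico]) (measure_mono hWIco))]
    refine tsub_le_iff_right.mpr ?_
    rw [Real.volume_Ico, sub_zero]
    rw [add_comm]
    exact hsumW
  calc volume {t | t ∈ Ico (0:ℝ) 1 ∧ t ∉ A (dyadicIdx n (dyadicPerm m σ t))}
      ≤ volume ((⋃ k, (W k \ A k)) ∪ (Ico (0:ℝ) 1 \ ⋃ k, W k)) := measure_mono hMsub
    _ ≤ volume (⋃ k, (W k \ A k)) + volume (Ico (0:ℝ) 1 \ ⋃ k, W k) := measure_union_le _ _
    _ ≤ (∑ k, volume (W k \ A k)) + ENNReal.ofReal (((n:ℝ)+1)*((2*(n:ℝ)+1)*δ')) :=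
        add_le_add (measure_iUnion_fintype_le _ _) hrem
    _ ≤ (∑ _k : Fin (n+1), ENNReal.ofReal δ') + ENNReal.ofReal (((n:ℝ)+1)*((2*(n:ℝ)+1)*δ')) :=
        add_le_add (Finset.sum_le_sum fun k _ => (hWA k).le) le_rfl
    _ = ENNReal.ofReal (((n:ℝ)+1)*δ' + ((n:ℝ)+1)*((2*(n:ℝ)+1)*δ')) := by
        rw [Finset.sum_const, Finset.card_univ, Fintype.card_fin, nsmul_eq_mul,
          ← ENNReal.ofReal_natCast (n+1), ← ENNReal.ofReal_mul (by positivity),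
          ← ENNReal.ofReal_add (by positivity) (by positivity)]
        norm_num
    _ < ENNReal.ofReal δ := by
        rw [ENNReal.ofReal_lt_ofReal_iff hδ]
        have h1 : ((n:ℝ)+1)*δ' + ((n:ℝ)+1)*((2*(n:ℝ)+1)*δ')
            = (((n:ℝ)+1)*(2*(n:ℝ)+2))*δ' := by ring
        rw [h1, hδ'def]
        have h2 : (((n:ℝ)+1)*(2*(n:ℝ)+2)) < c := by rw [hc]; linarith
        calc (((n:ℝ)+1)*(2*(n:ℝ)+2))*(δ/c) < c*(δ/c) :=
              mul_lt_mul_of_pos_right h2 (by positivity)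
          _ = δ := by field_simp

/-- **Density of dyadic permutations for the strong operator topology**: for every
(not necessarily invertible) Lebesgue-measure-preserving transformation `S` of
`[0,1]`, every `f ∈ L²([0,1])` and every `ε > 0`, there is a dyadic permutation
`σ̂` with `‖f ∘ σ̂ - f ∘ S‖₂ < ε`. -/
theorem dyadicPerm_dense_strong_operator_topology
    (S : ℝ → ℝ) (hS : Set.MapsTo S (Set.Icc (0 : ℝ) 1) (Set.Icc (0 : ℝ) 1))
    (hSmp : MeasurePreserving S (volume.restrict (Set.Icc (0 : ℝ) 1))
      (volume.restrict (Set.Icc (0 : ℝ) 1)))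
    (f : ℝ → ℝ) (hf : MemLp f 2 (volume.restrict (Set.Icc (0 : ℝ) 1)))
    (ε : ℝ) (hε : 0 < ε) :
    ∃ (m : ℕ) (σ : Equiv.Perm (Fin (m + 1))),
      eLpNorm (fun t => f (dyadicPerm m σ t) - f (S t)) 2
        (volume.restrict (Set.Icc (0 : ℝ) 1)) < ENNReal.ofReal ε := by
  classical
  obtain ⟨n, c, hstep⟩ := exists_step_approx f hf (show (0:ℝ) < ε/4 by linarith)
  set g : ℝ → ℝ := fun t => c (dyadicIdx n t) with hgdef
  have hgmeas : Measurable g := measurable_comp_dyadicIdx c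
  -- the level sets of `dyadicIdx n ∘ S`
  set A : Fin (n+1) → Set ℝ := fun k => Ico (0:ℝ) 1 ∩ S ⁻¹' (dyadicIdx n ⁻¹' {k}) with hAdef
  have hpreimmeas : ∀ k : Fin (n+1), MeasurableSet (S ⁻¹' (dyadicIdx n ⁻¹' {k})) :=
    fun k => hSmp.measurable (measurable_dyadicIdx n (measurableSet_singleton k))
  have hAmeas : ∀ k, MeasurableSet (A k) := fun k => measurableSet_Ico.inter (hpreimmeas k)
  have hAsub : ∀ k, A k ⊆ Ico (0:ℝ) 1 := fun k => inter_subset_left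
  have hAdisj : ∀ k l : Fin (n+1), k ≠ l → Disjoint (A k) (A l) := by
    intro k l hkl
    rw [Set.disjoint_left]
    rintro t ⟨-, htk⟩ ⟨-, htl⟩
    have h1 : dyadicIdx n (S t) = k := htk
    have h2 : dyadicIdx n (S t) = l := htl
    exact hkl (h1 ▸ h2 ▸ rfl)
  have hAvol : ∀ k, ENNReal.ofReal (1/((n:ℝ)+1)) ≤ volume (A k) := by
    intro k
    have h1 : volume (A k) = μ₀ (S ⁻¹' (dyadicIdx n ⁻¹' {k})) := by
      rw [Measure.restrict_apply (hpreimmeas k), volume_inter_Icc_eq_Ico, hAdef, inter_comm]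
    have h2 : μ₀ (S ⁻¹' (dyadicIdx n ⁻¹' {k})) = μ₀ (dyadicIdx n ⁻¹' {k}) := by
      conv_rhs => rw [← hSmp.map_eq]
      rw [Measure.map_apply hSmp.measurable (measurable_dyadicIdx n (measurableSet_singleton k))]
    rw [h1, h2, Measure.restrict_apply (measurable_dyadicIdx n (measurableSet_singleton k))]
    calc ENNReal.ofReal (1/((n:ℝ)+1)) = volume (dI n k) := by
          rw [volume_dI]
      _ ≤ volume (dyadicIdx n ⁻¹' {k} ∩ Icc 0 1) := by
          refine measure_mono fun t ht => ?_
          exact ⟨dyadicIdx_eq_of_mem_dI ht, Icc_subset_Icc le_rfl le_rfl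
            (mem_Icc.mpr ⟨(dI_subset_Ico k ht).1, (dI_subset_Ico k ht).2.le⟩)⟩
  -- the bound on the step values
  set C : ℝ := 1 + ∑ k, |c k| with hCdef
  have hsumnn : (0:ℝ) ≤ ∑ k, |c k| := Finset.sum_nonneg fun k _ => abs_nonneg _
  have hC1 : (1:ℝ) ≤ C := by rw [hCdef]; linarith
  have hCb : ∀ k, |c k| ≤ C := by
    intro k
    have := Finset.single_le_sum (f := fun i => |c i|) (fun i _ => abs_nonneg (c i))
      (Finset.mem_univ k)
    rw [hCdef]; linarith
  have h2C : (0:ℝ) < 2*C+1 := by linarith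
  set θ : ℝ := ε/(4*(2*C+1)) with hθdef
  have hθpos : 0 < θ := by rw [hθdef]; positivity
  obtain ⟨m, σ, hM⟩ := key_assignment A hAmeas hAsub hAdisj hAvol
    (show (0:ℝ) < θ^2 by positivity)
  refine ⟨m, σ, ?_⟩
  -- mismatch set
  set Z : Set ℝ := {t | dyadicIdx n (dyadicPerm m σ t) ≠ dyadicIdx n (S t)} with hZdef
  have humeas : Measurable (fun t => dyadicIdx n (dyadicPerm m σ t)) :=
    (measurable_dyadicIdx n).comp (measurable_dyadicPerm m σ)
  have hvmeas : Measurable (fun t => dyadicIdx n (S t)) :=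
    (measurable_dyadicIdx n).comp hSmp.measurable
  have hZmeas : MeasurableSet Z := by
    have hcompl : Zᶜ = ⋃ k : Fin (n+1),
        ((fun t => dyadicIdx n (dyadicPerm m σ t)) ⁻¹' {k}) ∩
          ((fun t => dyadicIdx n (S t)) ⁻¹' {k}) := by
      ext t
      simp only [hZdef, mem_compl_iff, mem_setOf_eq, not_not, mem_iUnion, mem_inter_iff,
        mem_preimage, mem_singleton_iff]
      constructor
      · intro h
        exact ⟨dyadicIdx n (S t), h, rfl⟩
      · rintro ⟨k, h1, h2⟩
        rw [h1, h2]
    rw [← compl_compl Z, hcompl]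
    exact (MeasurableSet.iUnion fun k =>
      (humeas (measurableSet_singleton k)).inter (hvmeas (measurableSet_singleton k))).compl
  have hμZ : μ₀ Z < ENNReal.ofReal (θ^2) := by
    rw [Measure.restrict_apply hZmeas]
    calc volume (Z ∩ Icc 0 1)
        ≤ volume ({t | t ∈ Ico (0:ℝ) 1 ∧ t ∉ A (dyadicIdx n (dyadicPerm m σ t))} ∪ {(1:ℝ)}) := by
          refine measure_mono fun t ht => ?_
          obtain ⟨htZ, htIcc⟩ := ht
          rcases lt_or_eq_of_le htIcc.2 with hlt | heq
          · left
            refine ⟨⟨htIcc.1, hlt⟩, fun hA => ?_⟩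
            have : dyadicIdx n (S t) = dyadicIdx n (dyadicPerm m σ t) := hA.2
            exact htZ this.symm
          · right
            exact heq
      _ ≤ volume {t | t ∈ Ico (0:ℝ) 1 ∧ t ∉ A (dyadicIdx n (dyadicPerm m σ t))}
            + volume {(1:ℝ)} := measure_union_le _ _
      _ = volume {t | t ∈ Ico (0:ℝ) 1 ∧ t ∉ A (dyadicIdx n (dyadicPerm m σ t))} := by
          rw [Real.volume_singleton, add_zero]
      _ < ENNReal.ofReal (θ^2) := hM
  -- the middle term
  have hmid : eLpNorm (fun t => g (dyadicPerm m σ t) - g (S t)) 2 μ₀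
      ≤ ENNReal.ofReal (ε/4) := by
    set h : ℝ → ℝ := fun t => g (dyadicPerm m σ t) - g (S t) with hhdef
    have hind : h = Z.indicator h := by
      funext t
      by_cases ht : t ∈ Z
      · rw [Set.indicator_of_mem ht]
      · rw [Set.indicator_of_notMem ht]
        have : dyadicIdx n (dyadicPerm m σ t) = dyadicIdx n (S t) := not_not.mp ht
        simp only [hhdef, hgdef, this, sub_self]
    calc eLpNorm h 2 μ₀ = eLpNorm h 2 (Measure.restrict μ₀ Z) := by
          conv_lhs => rw [hind]
          exact eLpNorm_indicator_eq_eLpNorm_restrict hZmeas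
      _ ≤ (Measure.restrict μ₀ Z) Set.univ ^ (2:ENNReal).toReal⁻¹ * ENNReal.ofReal (2*C) := by
          refine eLpNorm_le_of_ae_bound (ae_of_all _ fun t => ?_)
          rw [Real.norm_eq_abs]
          calc |h t| ≤ |g (dyadicPerm m σ t)| + |g (S t)| := abs_sub _ _
            _ ≤ C + C := add_le_add (hCb _) (hCb _)
            _ = 2*C := by ring
      _ ≤ ENNReal.ofReal θ * ENNReal.ofReal (2*C) := by
          refine mul_le_mul' ?_ le_rfl
          rw [Measure.restrict_apply_univ]
          have h1 : μ₀ Z ≤ (ENNReal.ofReal θ)^2 := by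
            refine le_trans hμZ.le (le_of_eq ?_)
            rw [← ENNReal.ofReal_pow hθpos.le]
          calc μ₀ Z ^ (2:ENNReal).toReal⁻¹ ≤ ((ENNReal.ofReal θ)^2) ^ (2:ENNReal).toReal⁻¹ :=
                ENNReal.rpow_le_rpow h1 (by norm_num [ENNReal.toReal_ofNat])
            _ = ENNReal.ofReal θ := by
                rw [ENNReal.toReal_ofNat, ← ENNReal.rpow_natCast (ENNReal.ofReal θ) 2,
                  ← ENNReal.rpow_mul]
                norm_num
      _ = ENNReal.ofReal (θ * (2*C)) := by rw [ENNReal.ofReal_mul hθpos.le]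
      _ ≤ ENNReal.ofReal (ε/4) := by
          refine ENNReal.ofReal_le_ofReal ?_
          rw [hθdef]
          rw [div_mul_eq_mul_div, div_le_div_iff₀ (by positivity) (by norm_num)]
          nlinarith
  -- assembling by the triangle inequality
  have hfg_aesm : AEStronglyMeasurable (fun t => f t - g t) μ₀ :=
    hf.aestronglyMeasurable.sub hgmeas.aestronglyMeasurable
  have he1 : eLpNorm (fun t => f (dyadicPerm m σ t) - g (dyadicPerm m σ t)) 2 μ₀
      < ENNReal.ofReal (ε/4) := by
    have h := eLpNorm_comp_measurePreserving (p := 2) hfg_aesm (measurePreserving_dyadicPerm m σ)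
    calc eLpNorm (fun t => f (dyadicPerm m σ t) - g (dyadicPerm m σ t)) 2 μ₀
        = eLpNorm ((fun t => f t - g t) ∘ (dyadicPerm m σ)) 2 μ₀ := rfl
      _ = eLpNorm (fun t => f t - g t) 2 μ₀ := h
      _ < ENNReal.ofReal (ε/4) := hstep
  have he3 : eLpNorm (fun t => g (S t) - f (S t)) 2 μ₀ < ENNReal.ofReal (ε/4) := by
    have h := eLpNorm_comp_measurePreserving (p := 2)
      (hgmeas.aestronglyMeasurable.sub hf.aestronglyMeasurable) hSmp
    calc eLpNorm (fun t => g (S t) - f (S t)) 2 μ₀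
        = eLpNorm ((fun t => g t - f t) ∘ S) 2 μ₀ := rfl
      _ = eLpNorm (fun t => g t - f t) 2 μ₀ := h
      _ = eLpNorm (fun t => f t - g t) 2 μ₀ := eLpNorm_sub_comm _ _ _ _
      _ < ENNReal.ofReal (ε/4) := hstep
  have haesm1 : AEStronglyMeasurable (fun t => f (dyadicPerm m σ t) - g (dyadicPerm m σ t)) μ₀ :=
    hfg_aesm.comp_quasiMeasurePreserving (measurePreserving_dyadicPerm m σ).quasiMeasurePreserving
  have haesm2 : AEStronglyMeasurable (fun t => g (dyadicPerm m σ t) - g (S t)) μ₀ :=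
    ((hgmeas.comp (measurable_dyadicPerm m σ)).sub (hgmeas.comp hSmp.measurable)).aestronglyMeasurable
  have haesm3 : AEStronglyMeasurable (fun t => g (S t) - f (S t)) μ₀ :=
    (hgmeas.aestronglyMeasurable.sub hf.aestronglyMeasurable).comp_quasiMeasurePreserving
      hSmp.quasiMeasurePreserving
  have hdecomp : (fun t => f (dyadicPerm m σ t) - f (S t))
      = fun t => ((fun t => f (dyadicPerm m σ t) - g (dyadicPerm m σ t)) t
          + (fun t => g (dyadicPerm m σ t) - g (S t)) t)
          + (fun t => g (S t) - f (S t)) t := by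
    funext t
    simp only
    ring
  calc eLpNorm (fun t => f (dyadicPerm m σ t) - f (S t)) 2 μ₀
      ≤ eLpNorm (fun t => (fun t => f (dyadicPerm m σ t) - g (dyadicPerm m σ t)) t
          + (fun t => g (dyadicPerm m σ t) - g (S t)) t) 2 μ₀
        + eLpNorm (fun t => g (S t) - f (S t)) 2 μ₀ := by
        rw [hdecomp]
        exact eLpNorm_add_le (haesm1.add haesm2) haesm3 (by norm_num)
    _ ≤ (eLpNorm (fun t => f (dyadicPerm m σ t) - g (dyadicPerm m σ t)) 2 μ₀
          + eLpNorm (fun t => g (dyadicPerm m σ t) - g (S t)) 2 μ₀)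
        + eLpNorm (fun t => g (S t) - f (S t)) 2 μ₀ :=
        add_le_add (eLpNorm_add_le haesm1 haesm2 (by norm_num)) le_rfl
    _ ≤ (ENNReal.ofReal (ε/4) + ENNReal.ofReal (ε/4)) + ENNReal.ofReal (ε/4) :=
        add_le_add (add_le_add he1.le hmid) he3.le
    _ < ENNReal.ofReal ε := by
        rw [← ENNReal.ofReal_add (by linarith) (by linarith),
          ← ENNReal.ofReal_add (by linarith) (by linarith)]
        exact (ENNReal.ofReal_lt_ofReal_iff hε).mpr (by linarith)
end

section
/- (Skorokhod's representation theorem) Let (X, Σ, μ) be a finite measure space and f, f_n : X → ℝ measurable functions such that f_n converges to f in distribution, i.e. the distribution functions satisfy μ{ω : f_n(ω) < x} → μ{ω : f(ω) < x} at every x at which x ↦ μ{ω : f(ω) < x} is continuous. Then on the interval I = (0, μ(X)) with Lebesgue measure |·| there exist measurable functions g_n, g : I → ℝ such that g_n(t) → g(t) for almost every t, and μ{ω : f_n(ω) < x} = |{t ∈ I : g_n(t) < x}| and μ{ω : f(ω) < x} = |{t ∈ I : g(t) < x}| for every x ∈ ℝ and every n ≥ 1. -/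
open MeasureTheory Filter Set Topology

namespace SkorokhodAux

variable {F : ℝ → ℝ} {m t x : ℝ}

/-- The (left-continuous-CDF) quantile function. -/
noncomputable def Q (F : ℝ → ℝ) (t : ℝ) : ℝ := sInf {y | t < F y}

lemma bddBelow_S (hm : Monotone F) (h : ∃ y, F y < t) : BddBelow {y | t < F y} := by
  obtain ⟨y0, hy0⟩ := h
  refine ⟨y0, fun z hz => ?_⟩
  by_contra hc
  push_neg at hc
  exact absurd hz (by simp only [mem_setOf_eq, not_lt]; exact (hm hc.le).trans hy0.le)

lemma Q_lt_iff (hm : Monotone F)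
    (hlc : ∀ x t, t < F x → ∃ y < x, t < F y)
    (hne : ∃ y, t < F y) (hb : ∃ y, F y < t) :
    Q F t < x ↔ t < F x := by
  constructor
  · intro h
    obtain ⟨y, hyS, hyx⟩ := (csInf_lt_iff (bddBelow_S hm hb) hne).1 h
    exact lt_of_lt_of_le hyS (hm hyx.le)
  · intro h
    obtain ⟨y, hyx, hty⟩ := hlc x t h
    exact lt_of_le_of_lt (csInf_le (bddBelow_S hm hb) hty) hyx

lemma le_Q (hm : Monotone F) (hne : ∃ y, t < F y) (hFx : F x ≤ t) : x ≤ Q F t := by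
  refine le_csInf hne fun z hz => ?_
  by_contra hc
  push_neg at hc
  exact absurd hz (by simp only [mem_setOf_eq, not_lt]; exact (hm hc.le).trans hFx)

lemma Q_le_of_mem (hm : Monotone F) (hb : ∃ y, F y < t) (hx : t < F x) : Q F t ≤ x :=
  csInf_le (bddBelow_S hm hb) hx

/-- EReal-valued version of the quantile function; globally monotone. -/
noncomputable def Qe (F : ℝ → ℝ) (t : ℝ) : EReal := sInf (Real.toEReal '' {y | t < F y})

lemma Qe_mono : Monotone (Qe F) := fun t1 t2 h =>
  sInf_le_sInf (image_mono fun y hy => lt_of_le_of_lt h hy)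

lemma Qe_eq_coe (hm : Monotone F) (hne : ∃ y, t < F y) (hb : ∃ y, F y < t) :
    Qe F t = ((Q F t : ℝ) : EReal) := by
  refine IsGLB.sInf_eq ⟨?_, ?_⟩
  · rintro _ ⟨y, hy, rfl⟩
    exact_mod_cast csInf_le (bddBelow_S hm hb) hy
  · intro b hb'
    induction b using EReal.rec with
    | bot => exact bot_le
    | coe b =>
      have : (b : EReal) ≤ (Q F t : ℝ) := by
        have : b ≤ Q F t := le_csInf hne fun z hz => by
          exact_mod_cast hb' ⟨z, hz, rfl⟩
        exact_mod_cast this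
      exact this
    | top =>
      obtain ⟨y, hy⟩ := hne
      have := hb' ⟨y, hy, rfl⟩
      simp at this


/-- Near a point of left-continuity of `Qe F`, we can approximate `Q F t` from the left. -/
lemma exists_left_approx (hm : Monotone F)
    (hS : ∀ t', 0 < t' → t' < m → (∃ y, t' < F y) ∧ (∃ y, F y < t'))
    (ht : t ∈ Ioo (0:ℝ) m)
    (hc : ContinuousWithinAt (Qe F) (Iio t) t) {ε : ℝ} (hε : 0 < ε) :
    ∃ t' ∈ Ioo (0:ℝ) t, Q F t - ε < Q F t' := by
  obtain ⟨hSne, hSb⟩ := hS t ht.1 ht.2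
  have hqe : Qe F t = ((Q F t : ℝ) : EReal) := Qe_eq_coe hm hSne hSb
  have hmem : Ioi (((Q F t - ε : ℝ)) : EReal) ∈ 𝓝 (Qe F t) := by
    rw [hqe]
    refine isOpen_Ioi.mem_nhds ?_
    rw [mem_Ioi, EReal.coe_lt_coe_iff]
    exact sub_lt_self _ hε
  have h1 : ∀ᶠ t' in 𝓝[<] t, Qe F t' ∈ Ioi (((Q F t - ε : ℝ)) : EReal) := hc hmem
  have h2 : Ioo (0:ℝ) t ∈ 𝓝[<] t := Ioo_mem_nhdsLT_of_mem ⟨ht.1, le_refl t⟩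
  obtain ⟨t', ht'1, ht'2⟩ := (h1.and (eventually_of_mem h2 fun x hx => hx)).exists
  refine ⟨t', ht'2, ?_⟩
  obtain ⟨hSne', hSb'⟩ := hS t' ht'2.1 (ht'2.2.trans ht.2)
  rw [Qe_eq_coe hm hSne' hSb', mem_Ioi, EReal.coe_lt_coe_iff] at ht'1
  exact ht'1

/-- Any nonempty open interval contains a continuity point of a monotone function. -/
lemma exists_continuousAt (hm : Monotone F) {u v : ℝ} (huv : u < v) :
    ∃ x ∈ Ioo u v, ContinuousAt F x := by
  by_contra hcon
  push_neg at hcon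
  have hsub : Ioo u v ⊆ {x | ¬ContinuousAt F x} := fun x hx => hcon x hx
  have h0 : volume (Ioo u v) = 0 :=
    measure_mono_null hsub (hm.countable_not_continuousAt.measure_zero _)
  rw [Real.volume_Ioo] at h0
  simp only [ENNReal.ofReal_eq_zero, sub_nonpos] at h0
  exact absurd h0 (not_le.2 huv)

/-- The main convergence lemma for quantile functions. -/
lemma tendsto_Q {Fn : ℕ → ℝ → ℝ} (hm : Monotone F)
    (hlc : ∀ x t, t < F x → ∃ y < x, t < F y)
    (hS : ∀ t', 0 < t' → t' < m → (∃ y, t' < F y) ∧ (∃ y, F y < t'))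
    (hmn : ∀ n, Monotone (Fn n))
    (hSn : ∀ n t', 0 < t' → t' < m → (∃ y, t' < Fn n y) ∧ (∃ y, Fn n y < t'))
    (hconv : ∀ x, ContinuousAt F x → Tendsto (fun n => Fn n x) atTop (𝓝 (F x)))
    (ht : t ∈ Ioo (0:ℝ) m)
    (hc : ContinuousWithinAt (Qe F) (Iio t) t) :
    Tendsto (fun n => Q (Fn n) t) atTop (𝓝 (Q F t)) := by
  obtain ⟨hSne, hSb⟩ := hS t ht.1 ht.2
  refine tendsto_order.2 ⟨fun a ha => ?_, fun b hb => ?_⟩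
  · -- a < Q F t, eventually a < Q (Fn n) t
    obtain ⟨t', ht', hqt'⟩ := exists_left_approx hm hS ht hc (sub_pos.2 ha)
    have hq' : a < Q F t' := by linarith
    obtain ⟨x, hx, hcx⟩ := exists_continuousAt hm hq'
    -- x < Q F t', so ¬ t' < F x, i.e. F x ≤ t' < t
    have ht'I : t' ∈ Ioo (0:ℝ) m := ⟨ht'.1, ht'.2.trans ht.2⟩
    obtain ⟨hSne', hSb'⟩ := hS t' ht'I.1 ht'I.2
    have hFx : F x ≤ t' := by
      by_contra hcon
      push_neg at hcon
      exact absurd ((Q_lt_iff hm hlc hSne' hSb').2 hcon) (not_lt.2 hx.2.le)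
    have hFxt : F x < t := lt_of_le_of_lt hFx ht'.2
    filter_upwards [(hconv x hcx).eventually (eventually_lt_nhds hFxt)] with n hn
    exact lt_of_lt_of_le hx.1 (le_Q (hmn n) ((hSn n t ht.1 ht.2).1) hn.le)
  · -- Q F t < b, eventually Q (Fn n) t < b
    obtain ⟨x, hx, hcx⟩ := exists_continuousAt hm hb
    have hFx : t < F x := (Q_lt_iff hm hlc hSne hSb).1 hx.1
    filter_upwards [(hconv x hcx).eventually (eventually_gt_nhds hFx)] with n hn
    exact lt_of_le_of_lt (Q_le_of_mem (hmn n) ((hSn n t ht.1 ht.2).2) hn) hx.2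


section CDF

variable {X : Type*} [MeasurableSpace X] (μ : Measure X) [IsFiniteMeasure μ] (f : X → ℝ)

lemma cdf_mono : Monotone (fun x => (μ {ω | f ω < x}).toReal) := fun x y hxy =>
  ENNReal.toReal_mono (measure_ne_top μ _)
    (measure_mono fun ω hω => lt_of_lt_of_le hω hxy)

lemma cdf_lc : ∀ x t, t < (μ {ω | f ω < x}).toReal →
    ∃ y < x, t < (μ {ω | f ω < y}).toReal := by
  intro x t ht
  rcases lt_or_ge t 0 with h0 | h0
  · exact ⟨x - 1, by linarith, lt_of_lt_of_le h0 ENNReal.toReal_nonneg⟩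
  have hkey : μ {ω | f ω < x} = ⨆ n : ℕ, μ {ω | f ω < x - 1/(n+1)} := by
    rw [← Monotone.measure_iUnion]
    · congr 1
      ext ω
      simp only [mem_iUnion, mem_setOf_eq]
      constructor
      · intro h
        obtain ⟨n, hn⟩ := exists_nat_one_div_lt (K := ℝ) (sub_pos.2 h)
        exact ⟨n, by linarith⟩
      · rintro ⟨n, hn⟩
        have : (0:ℝ) < 1/(n+1) := by positivity
        linarith
    · intro a b hab ω hω
      simp only [mem_setOf_eq] at hω ⊢
      have h1 : (1:ℝ)/(b+1) ≤ 1/(a+1) := by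
        apply one_div_le_one_div_of_le
        · positivity
        · exact_mod_cast Nat.succ_le_succ hab
      linarith
  have h1 : ENNReal.ofReal t < μ {ω | f ω < x} :=
    (ENNReal.ofReal_lt_iff_lt_toReal h0 (measure_ne_top μ _)).2 ht
  rw [hkey] at h1
  obtain ⟨n, hn⟩ := lt_iSup_iff.1 h1
  refine ⟨x - 1/(n+1), by
    have : (0:ℝ) < 1/(n+1) := by positivity
    linarith, ?_⟩
  exact (ENNReal.ofReal_lt_iff_lt_toReal h0 (measure_ne_top μ _)).1 hn

lemma cdf_sup : ∀ t, t < (μ univ).toReal → ∃ y, t < (μ {ω | f ω < y}).toReal := by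
  intro t ht
  rcases lt_or_ge t 0 with h0 | h0
  · exact ⟨0, lt_of_lt_of_le h0 ENNReal.toReal_nonneg⟩
  have hkey : μ univ = ⨆ n : ℕ, μ {ω | f ω < n} := by
    rw [← Monotone.measure_iUnion]
    · congr 1
      ext ω
      simp only [mem_iUnion, mem_setOf_eq, mem_univ, true_iff]
      obtain ⟨n, hn⟩ := exists_nat_gt (f ω)
      exact ⟨n, hn⟩
    · intro a b hab ω hω
      simp only [mem_setOf_eq] at hω ⊢
      exact lt_of_lt_of_le hω (by exact_mod_cast hab)
  have h1 : ENNReal.ofReal t < μ univ :=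
    (ENNReal.ofReal_lt_iff_lt_toReal h0 (measure_ne_top μ _)).2 ht
  rw [hkey] at h1
  obtain ⟨n, hn⟩ := lt_iSup_iff.1 h1
  exact ⟨n, (ENNReal.ofReal_lt_iff_lt_toReal h0 (measure_ne_top μ _)).1 hn⟩

lemma cdf_inf (hf : Measurable f) :
    ∀ t, 0 < t → ∃ y, (μ {ω | f ω < y}).toReal < t := by
  intro t ht
  have hkey : (⋂ n : ℕ, {ω | f ω < -(n:ℝ)}) = ∅ := by
    rw [eq_empty_iff_forall_notMem]
    intro ω hω
    simp only [mem_iInter, mem_setOf_eq] at hω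
    obtain ⟨n, hn⟩ := exists_nat_gt (-f ω)
    have := hω n
    linarith
  have hinf : (⨅ n : ℕ, μ {ω | f ω < -(n:ℝ)}) = 0 := by
    rw [← Antitone.measure_iInter]
    · rw [hkey]; exact measure_empty
    · intro a b hab ω hω
      simp only [mem_setOf_eq] at hω ⊢
      refine lt_of_lt_of_le hω ?_
      simp only [neg_le_neg_iff]
      exact_mod_cast hab
    · exact fun n => (hf measurableSet_Iio).nullMeasurableSet
    · exact ⟨0, measure_ne_top μ _⟩
  have h1 : (⨅ n : ℕ, μ {ω | f ω < -(n:ℝ)}) < ENNReal.ofReal t := by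
    rw [hinf]
    exact ENNReal.ofReal_pos.2 ht
  obtain ⟨n, hn⟩ := iInf_lt_iff.1 h1
  exact ⟨-(n:ℝ), (ENNReal.lt_ofReal_iff_toReal_lt (measure_ne_top μ _)).1 hn⟩

end CDF

lemma sep_eq (hm : Monotone F)
    (hlc : ∀ x t, t < F x → ∃ y < x, t < F y)
    (hS : ∀ t', 0 < t' → t' < m → (∃ y, t' < F y) ∧ (∃ y, F y < t'))
    (hFm : ∀ x, F x ≤ m) (x : ℝ) :
    {t ∈ Ioo (0:ℝ) m | (if t ∈ Ioo (0:ℝ) m then Q F t else 0) < x} = Ioo 0 (F x) := by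
  ext t
  simp only [mem_sep_iff, mem_Ioo]
  constructor
  · rintro ⟨⟨h0, hm'⟩, hq⟩
    rw [if_pos (⟨h0, hm'⟩ : t ∈ Ioo (0:ℝ) m)] at hq
    obtain ⟨a, b⟩ := hS t h0 hm'
    exact ⟨h0, (Q_lt_iff hm hlc a b).1 hq⟩
  · rintro ⟨h0, hFx⟩
    have hm' : t < m := lt_of_lt_of_le hFx (hFm x)
    obtain ⟨a, b⟩ := hS t h0 hm'
    refine ⟨⟨h0, hm'⟩, ?_⟩
    rw [if_pos (⟨h0, hm'⟩ : t ∈ Ioo (0:ℝ) m)]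
    exact (Q_lt_iff hm hlc a b).2 hFx

lemma measurable_g (hm : Monotone F)
    (hlc : ∀ x t, t < F x → ∃ y < x, t < F y)
    (hS : ∀ t', 0 < t' → t' < m → (∃ y, t' < F y) ∧ (∃ y, F y < t'))
    (hFm : ∀ x, F x ≤ m) :
    Measurable (fun t => if t ∈ Ioo (0:ℝ) m then Q F t else 0) := by
  apply measurable_of_Iio
  intro x
  have hpre : (fun t => if t ∈ Ioo (0:ℝ) m then Q F t else 0) ⁻¹' Iio x
      = Ioo 0 (F x) ∪ (if 0 < x then (Ioo (0:ℝ) m)ᶜ else ∅) := by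
    ext t
    simp only [mem_preimage, mem_Iio, mem_union]
    by_cases htI : t ∈ Ioo (0:ℝ) m
    · rw [if_pos htI]
      obtain ⟨a, b⟩ := hS t htI.1 htI.2
      rw [Q_lt_iff hm hlc a b]
      constructor
      · intro h
        exact Or.inl ⟨htI.1, h⟩
      · rintro (⟨_, h⟩ | h)
        · exact h
        · by_cases hx : 0 < x
          · rw [if_pos hx] at h
            exact absurd htI h
          · rw [if_neg hx] at h
            exact absurd h (notMem_empty t)
    · rw [if_neg htI]
      constructor
      · intro h
        refine Or.inr ?_
        rw [if_pos h]
        exact htI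
      · rintro (⟨h0, hFx⟩ | h)
        · exact absurd (⟨h0, lt_of_lt_of_le hFx (hFm x)⟩ : t ∈ Ioo (0:ℝ) m) htI
        · by_cases hx : 0 < x
          · exact hx
          · rw [if_neg hx] at h
            exact absurd h (notMem_empty t)
  rw [hpre]
  refine measurableSet_Ioo.union ?_
  split
  · exact measurableSet_Ioo.compl
  · exact MeasurableSet.empty

end SkorokhodAux

open SkorokhodAux in
/-- **Skorokhod's representation theorem.** If measurable functions `fₙ` on a
finite measure space `(X, Σ, μ)` converge in distribution to `f` (i.e. the
distribution functions converge at every continuity point of the distribution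
function of `f`), then on the interval `I = (0, μ X)` with Lebesgue measure
there are measurable functions `gₙ, g` with the same distribution functions as
`fₙ, f`, such that `gₙ → g` almost everywhere on `I`. -/
theorem skorokhod_representation
    {X : Type*} [MeasurableSpace X] (μ : Measure X) [IsFiniteMeasure μ]
    (f : X → ℝ) (fn : ℕ → X → ℝ)
    (hf : Measurable f) (hfn : ∀ n, Measurable (fn n))
    (hdist : ∀ x : ℝ,
      ContinuousAt (fun y : ℝ => (μ {ω | f ω < y}).toReal) x →
      Tendsto (fun n => (μ {ω | fn n ω < x}).toReal) atTop
        (nhds ((μ {ω | f ω < x}).toReal))) :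
    ∃ (g : ℝ → ℝ) (gn : ℕ → ℝ → ℝ),
      Measurable g ∧ (∀ n, Measurable (gn n)) ∧
      (∀ᵐ t ∂(volume.restrict (Set.Ioo (0 : ℝ) (μ Set.univ).toReal)),
        Tendsto (fun n => gn n t) atTop (nhds (g t))) ∧
      (∀ (x : ℝ) (n : ℕ),
        μ {ω | fn n ω < x} =
          volume {t ∈ Set.Ioo (0 : ℝ) (μ Set.univ).toReal | gn n t < x}) ∧
      (∀ x : ℝ,
        μ {ω | f ω < x} =
          volume {t ∈ Set.Ioo (0 : ℝ) (μ Set.univ).toReal | g t < x}) := by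
  classical
  set m : ℝ := (μ Set.univ).toReal with hm_def
  set F : ℝ → ℝ := fun x => (μ {ω | f ω < x}).toReal with hF_def
  set Fn : ℕ → ℝ → ℝ := fun n x => (μ {ω | fn n ω < x}).toReal with hFn_def
  have hmF : Monotone F := cdf_mono μ f
  have hmFn : ∀ n, Monotone (Fn n) := fun n => cdf_mono μ (fn n)
  have hlcF : ∀ x t, t < F x → ∃ y < x, t < F y := cdf_lc μ f
  have hSF : ∀ t', 0 < t' → t' < m → (∃ y, t' < F y) ∧ (∃ y, F y < t') :=
    fun t' h0 hm' => ⟨cdf_sup μ f t' hm', cdf_inf μ f hf t' h0⟩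
  have hSFn : ∀ n t', 0 < t' → t' < m → (∃ y, t' < Fn n y) ∧ (∃ y, Fn n y < t') :=
    fun n t' h0 hm' => ⟨cdf_sup μ (fn n) t' hm', cdf_inf μ (fn n) (hfn n) t' h0⟩
  have hFmF : ∀ x, F x ≤ m :=
    fun x => ENNReal.toReal_mono (measure_ne_top μ _) (measure_mono (subset_univ _))
  have hFmFn : ∀ n x, Fn n x ≤ m :=
    fun n x => ENNReal.toReal_mono (measure_ne_top μ _) (measure_mono (subset_univ _))
  refine ⟨fun t => if t ∈ Ioo (0:ℝ) m then Q F t else 0,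
    fun n t => if t ∈ Ioo (0:ℝ) m then Q (Fn n) t else 0,
    measurable_g hmF hlcF hSF hFmF,
    fun n => measurable_g (hmFn n) (cdf_lc μ (fn n)) (hSFn n) (hFmFn n),
    ?_, ?_, ?_⟩
  · -- a.e. convergence
    rw [ae_restrict_iff' measurableSet_Ioo, ae_iff]
    refine measure_mono_null ?_
      ((by simpa using ((Qe_mono (F := F)).monotoneOn univ).countable_not_continuousWithinAt_Iio :
        Set.Countable {x | ¬ContinuousWithinAt (Qe F) (Iio x) x}).measure_zero volume)
    intro t ht
    simp only [mem_setOf_eq] at ht ⊢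
    by_contra htB
    apply ht
    intro htI
    rw [if_pos htI]
    have hconv : ∀ n, (fun t => if t ∈ Ioo (0:ℝ) m then Q (Fn n) t else 0) t = Q (Fn n) t :=
      fun n => if_pos htI
    simp only [hconv]
    exact tendsto_Q hmF hlcF hSF hmFn hSFn hdist htI htB
  · -- distribution of gn
    intro x n
    rw [sep_eq (hmFn n) (cdf_lc μ (fn n)) (hSFn n) (hFmFn n) x, Real.volume_Ioo, sub_zero,
      ENNReal.ofReal_toReal (measure_ne_top μ _)]
  · -- distribution of g
    intro x
    rw [sep_eq hmF hlcF hSF hFmF x, Real.volume_Ioo, sub_zero,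
      ENNReal.ofReal_toReal (measure_ne_top μ _)]
end

section
/- (Majorization passes to almost-everywhere limits) Let (g_k) and (h_k) be sequences of measurable functions on [0,1], uniformly bounded by a constant C, with g_k ≺ h_k for every k. If g_k → g almost everywhere and h_k → h almost everywhere on [0,1], then g ≺ h. -/
open MeasureTheory Filter

/-- The decreasing rearrangement of a function `f` on a measure space `(X, μ)`
with `μ X = 1`: `f*(s) = inf {t : μ {f > t} ≤ s}`. -/
noncomputable def decRearr {X : Type*} [MeasurableSpace X] (μ : Measure X)
    (f : X → ℝ) : ℝ → ℝ :=
  fun s => sInf {t : ℝ | μ {ω | t < f ω} ≤ ENNReal.ofReal s}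

/-- Majorization of functions: `g ≺ f` iff
`∫_0^s g* ≤ ∫_0^s f*` for all `0 ≤ s < 1` and `∫_0^1 g* = ∫_0^1 f*`. -/
def FnMajorizedBy {X Y : Type*} [MeasurableSpace X] [MeasurableSpace Y]
    (ν : Measure Y) (g : Y → ℝ) (μ : Measure X) (f : X → ℝ) : Prop :=
  (∀ s ∈ Set.Ico (0 : ℝ) 1,
      ∫ z in Set.Ioo (0 : ℝ) s, decRearr ν g z ≤ ∫ z in Set.Ioo (0 : ℝ) s, decRearr μ f z) ∧
  ∫ z in Set.Ioo (0 : ℝ) 1, decRearr ν g z = ∫ z in Set.Ioo (0 : ℝ) 1, decRearr μ f z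

section Aux

variable {X : Type*} [MeasurableSpace X] {μ : Measure X} {f : X → ℝ} {C : ℝ}

/-- `C` always belongs to the defining set of `decRearr` when `|f| ≤ C` a.e. -/
lemma decRearr_mem_set (hC : ∀ᵐ ω ∂μ, |f ω| ≤ C) (s : ℝ) :
    C ∈ {t : ℝ | μ {ω | t < f ω} ≤ ENNReal.ofReal s} := by
  have h0 : μ {ω | C < f ω} = 0 := by
    rw [measure_eq_zero_iff_ae_notMem]
    filter_upwards [hC] with ω hω
    exact fun h => absurd ((abs_le.1 hω).2) (not_le.2 h)
  simp only [Set.mem_setOf_eq, h0]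
  exact zero_le

/-- Elements of the defining set are at least `-C`, provided `s < 1`. -/
lemma decRearr_set_lb [IsProbabilityMeasure μ] (hC : ∀ᵐ ω ∂μ, |f ω| ≤ C) {s : ℝ} (hs : s < 1)
    {t : ℝ} (ht : t ∈ {t : ℝ | μ {ω | t < f ω} ≤ ENNReal.ofReal s}) : -C ≤ t := by
  by_contra hcon
  push_neg at hcon
  have hae : {ω | t < f ω} =ᵐ[μ] (Set.univ : Set X) := by
    filter_upwards [hC] with ω hω
    have h1 : t < f ω := lt_of_lt_of_le hcon ((abs_le.1 hω).1)
    exact eq_true h1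
  have h1 : μ {ω | t < f ω} = 1 := by
    rw [measure_congr hae, measure_univ]
  rw [Set.mem_setOf_eq, h1] at ht
  exact absurd (lt_of_le_of_lt ht (ENNReal.ofReal_lt_one.2 hs)) (lt_irrefl _)

lemma decRearr_mem_Icc [IsProbabilityMeasure μ] (hC : ∀ᵐ ω ∂μ, |f ω| ≤ C) {s : ℝ} (hs : s < 1) :
    decRearr μ f s ∈ Set.Icc (-C) C := by
  constructor
  · exact le_csInf ⟨C, decRearr_mem_set hC s⟩ (fun t ht => decRearr_set_lb hC hs ht)
  · exact csInf_le ⟨-C, fun t ht => decRearr_set_lb hC hs ht⟩ (decRearr_mem_set hC s)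

lemma decRearr_antitoneOn [IsProbabilityMeasure μ] (hC : ∀ᵐ ω ∂μ, |f ω| ≤ C) :
    AntitoneOn (decRearr μ f) (Set.Iio (1 : ℝ)) := by
  intro s₁ hs₁ s₂ hs₂ h12
  refine csInf_le_csInf ⟨-C, fun t ht => decRearr_set_lb hC hs₂ ht⟩
    ⟨C, decRearr_mem_set hC s₁⟩ (fun t ht => ?_)
  exact le_trans ht (ENNReal.ofReal_le_ofReal h12)

/-- Convergence of (real-valued) distribution functions at non-atoms. -/
lemma tendsto_toReal_meas [IsFiniteMeasure μ] {fk : ℕ → X → ℝ}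
    (hmeas : ∀ k, Measurable (fk k)) (hf : Measurable f)
    (htend : ∀ᵐ ω ∂μ, Tendsto (fun k => fk k ω) atTop (nhds (f ω)))
    (t : ℝ) (h0 : μ {ω | f ω = t} = 0) :
    Tendsto (fun k => (μ {ω | t < fk k ω}).toReal) atTop
      (nhds ((μ {ω | t < f ω}).toReal)) := by
  have hAk : ∀ k, MeasurableSet {ω | t < fk k ω} :=
    fun k => measurableSet_lt measurable_const (hmeas k)
  have hA : MeasurableSet {ω | t < f ω} := measurableSet_lt measurable_const hf
  have key := tendsto_integral_of_dominated_convergence (μ := μ)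
    (F := fun k => ({ω | t < fk k ω}).indicator (fun _ => (1 : ℝ)))
    (f := ({ω | t < f ω}).indicator (fun _ => (1 : ℝ))) (bound := fun _ => 1)
    (fun k => (measurable_const.indicator (hAk k)).aestronglyMeasurable)
    (integrable_const 1)
    (fun k => Filter.Eventually.of_forall fun ω => by
      rw [Real.norm_eq_abs]
      by_cases h : ω ∈ {ω | t < fk k ω} <;> simp [Set.indicator_apply, h])
    (by
      filter_upwards [htend, measure_eq_zero_iff_ae_notMem.1 h0] with ω hω hne
      have hne' : f ω ≠ t := hne
      rcases hne'.lt_or_gt with hlt | hgt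
      · have hev : ∀ᶠ k in atTop, fk k ω ∈ Set.Iio t :=
          hω.eventually_mem (Iio_mem_nhds hlt)
        have h1 : ({ω | t < f ω}).indicator (fun _ => (1 : ℝ)) ω = 0 :=
          Set.indicator_of_notMem (by simp [Set.mem_setOf_eq, not_lt.2 hlt.le]) (fun _ => (1:ℝ))
        rw [h1]
        refine Tendsto.congr' ?_ tendsto_const_nhds
        filter_upwards [hev] with k hk
        exact (Set.indicator_of_notMem (by simpa using not_lt.2 hk.le) (fun _ => (1:ℝ))).symm
      · have hev : ∀ᶠ k in atTop, fk k ω ∈ Set.Ioi t :=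
          hω.eventually_mem (Ioi_mem_nhds hgt)
        have h1 : ({ω | t < f ω}).indicator (fun _ => (1 : ℝ)) ω = 1 :=
          Set.indicator_of_mem (by simpa using hgt) (fun _ => (1:ℝ))
        rw [h1]
        refine Tendsto.congr' ?_ tendsto_const_nhds
        filter_upwards [hev] with k hk
        exact (Set.indicator_of_mem (by simpa using hk) (fun _ => (1:ℝ))).symm)
  have heq : ∀ (s : Set X), MeasurableSet s →
      (∫ ω, s.indicator (fun _ => (1 : ℝ)) ω ∂μ) = (μ s).toReal := by
    intro s hs
    exact integral_indicator_one hs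
  rw [heq _ hA] at key
  refine key.congr fun k => heq _ (hAk k)

/-- Pointwise convergence of rearrangements at left-continuity points. -/
lemma tendsto_decRearr_pt [IsProbabilityMeasure μ] {fk : ℕ → X → ℝ}
    (hmeas : ∀ k, Measurable (fk k)) (hf : Measurable f)
    (hbd : ∀ k, ∀ᵐ ω ∂μ, |fk k ω| ≤ C) (hbf : ∀ᵐ ω ∂μ, |f ω| ≤ C)
    (htend : ∀ᵐ ω ∂μ, Tendsto (fun k => fk k ω) atTop (nhds (f ω)))
    {z : ℝ} (hz : z ∈ Set.Ioo (0 : ℝ) 1)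
    (hcont : ∀ ε > 0, ∃ s' ∈ Set.Ioo (0 : ℝ) z, decRearr μ f s' < decRearr μ f z + ε) :
    Tendsto (fun k => decRearr μ (fk k) z) atTop (nhds (decRearr μ f z)) := by
  set L := decRearr μ f z with hL
  have hbadc : Set.Countable {t : ℝ | 0 < μ {ω | f ω = t}} :=
    Measure.countable_meas_level_set_pos hf
  have pick : ∀ a b : ℝ, a < b → ∃ t ∈ Set.Ioo a b, μ {ω | f ω = t} = 0 := by
    intro a b hab
    by_contra hcon
    push_neg at hcon
    have hsub : Set.Ioo a b ⊆ {t : ℝ | 0 < μ {ω | f ω = t}} := by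
      intro t ht
      exact pos_iff_ne_zero.2 (hcon t ht)
    have hcnt : (Set.Ioo a b).Countable := hbadc.mono hsub
    have h1 := hcnt.le_aleph0
    rw [Cardinal.mk_Ioo_real hab] at h1
    exact absurd h1 (not_le.2 Cardinal.aleph0_lt_continuum)
  rw [Metric.tendsto_atTop]
  intro ε hε
  -- upper bound
  obtain ⟨s', hs'mem, hs'⟩ := hcont (ε / 2) (half_pos hε)
  obtain ⟨t₁, ht₁mem, ht₁0⟩ := pick (decRearr μ f s') (L + ε) (by linarith)
  have hFt₁ : μ {ω | t₁ < f ω} ≤ ENNReal.ofReal s' := by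
    obtain ⟨t', ht'mem, ht'lt⟩ := exists_lt_of_csInf_lt ⟨C, decRearr_mem_set hbf s'⟩ ht₁mem.1
    exact le_trans (measure_mono fun ω hω => lt_trans ht'lt hω) ht'mem
  have hFt₁R : (μ {ω | t₁ < f ω}).toReal < z :=
    lt_of_le_of_lt (ENNReal.toReal_le_of_le_ofReal hs'mem.1.le hFt₁) hs'mem.2
  have hup : ∀ᶠ k in atTop, decRearr μ (fk k) z < L + ε := by
    filter_upwards [(tendsto_toReal_meas hmeas hf htend t₁ ht₁0).eventually_lt_const hFt₁R]
      with k hk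
    have h1 : μ {ω | t₁ < fk k ω} ≤ ENNReal.ofReal z :=
      (ENNReal.le_ofReal_iff_toReal_le (measure_ne_top μ _) hz.1.le).2 hk.le
    have h2 : decRearr μ (fk k) z ≤ t₁ :=
      csInf_le ⟨-C, fun u hu => decRearr_set_lb (hbd k) hz.2 hu⟩ h1
    exact lt_of_le_of_lt h2 ht₁mem.2
  -- lower bound
  obtain ⟨t₂, ht₂mem, ht₂0⟩ := pick (L - ε) L (by linarith)
  have hFt₂ : ENNReal.ofReal z < μ {ω | t₂ < f ω} := by
    by_contra hcon
    push_neg at hcon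
    have : L ≤ t₂ := csInf_le ⟨-C, fun u hu => decRearr_set_lb hbf hz.2 hu⟩ hcon
    exact absurd ht₂mem.2 (not_lt.2 this)
  have hFt₂R : z < (μ {ω | t₂ < f ω}).toReal :=
    (ENNReal.ofReal_lt_iff_lt_toReal hz.1.le (measure_ne_top μ _)).1 hFt₂
  have hlow : ∀ᶠ k in atTop, L - ε < decRearr μ (fk k) z := by
    filter_upwards [(tendsto_toReal_meas hmeas hf htend t₂ ht₂0).eventually_const_lt hFt₂R]
      with k hk
    have h1 : ENNReal.ofReal z < μ {ω | t₂ < fk k ω} :=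
      (ENNReal.ofReal_lt_iff_lt_toReal hz.1.le (measure_ne_top μ _)).2 hk
    have h2 : t₂ ≤ decRearr μ (fk k) z := by
      refine le_csInf ⟨C, decRearr_mem_set (hbd k) z⟩ (fun u hu => ?_)
      by_contra hcon
      push_neg at hcon
      exact absurd (le_trans (measure_mono fun ω hω => lt_trans hcon hω) hu) (not_le.2 h1)
    exact lt_of_lt_of_le ht₂mem.1 h2
  obtain ⟨N, hN⟩ := (hup.and hlow).exists_forall_of_atTop
  refine ⟨N, fun n hn => ?_⟩
  obtain ⟨h1, h2⟩ := hN n hn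
  rw [Real.dist_eq, abs_sub_lt_iff]
  constructor <;> linarith

/-- Convergence of the partial integrals of the rearrangements. -/
lemma tendsto_setIntegral_decRearr [IsProbabilityMeasure μ] {fk : ℕ → X → ℝ}
    (hmeas : ∀ k, Measurable (fk k)) (hf : Measurable f)
    (hbd : ∀ k, ∀ᵐ ω ∂μ, |fk k ω| ≤ C)
    (htend : ∀ᵐ ω ∂μ, Tendsto (fun k => fk k ω) atTop (nhds (f ω)))
    {s : ℝ} (hs : s ≤ 1) :
    Tendsto (fun k => ∫ z in Set.Ioo (0 : ℝ) s, decRearr μ (fk k) z) atTop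
      (nhds (∫ z in Set.Ioo (0 : ℝ) s, decRearr μ f z)) := by
  have hbf : ∀ᵐ ω ∂μ, |f ω| ≤ C := by
    have hall : ∀ᵐ ω ∂μ, ∀ k, |fk k ω| ≤ C := ae_all_iff.2 hbd
    filter_upwards [htend, hall] with ω h1 h2
    exact le_of_tendsto h1.abs (Filter.Eventually.of_forall h2)
  have hsub : Set.Ioo (0 : ℝ) s ⊆ Set.Iio 1 := fun x hx => lt_of_lt_of_le hx.2 hs
  -- the bad set of left-discontinuity points
  set D : ℕ → ℝ → ℝ := fun n y => decRearr μ f (min y (1 - 1 / ((n : ℝ) + 1))) with hD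
  have hcn : ∀ n : ℕ, (1 - 1 / ((n : ℝ) + 1)) < 1 := by
    intro n
    have : 0 < 1 / ((n : ℝ) + 1) := by positivity
    linarith
  have hDanti : ∀ n, Antitone (D n) := by
    intro n a b hab
    exact decRearr_antitoneOn hbf
      (lt_of_le_of_lt (min_le_right _ _) (hcn n))
      (lt_of_le_of_lt (min_le_right _ _) (hcn n))
      (min_le_min hab le_rfl)
  have hMcnt : ∀ n, Set.Countable {x : ℝ | ¬ContinuousWithinAt (fun y => -D n y) (Set.Iio x) x} :=
    fun n => by simpa using ((show Monotone (fun y => -D n y) from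
      (fun a b hab => neg_le_neg (hDanti n hab))).monotoneOn Set.univ).countable_not_continuousWithinAt_Iio
  have hBnull :
      volume (⋃ n, {x : ℝ | ¬ContinuousWithinAt (fun y => -D n y) (Set.Iio x) x}) = 0 :=
    Set.Countable.measure_zero (Set.countable_iUnion hMcnt) _
  refine tendsto_integral_of_dominated_convergence (bound := fun _ => C)
    (fun k => (aemeasurable_restrict_of_antitoneOn measurableSet_Ioo
      ((decRearr_antitoneOn (hbd k)).mono hsub)).aestronglyMeasurable)
    (integrableOn_const (C := C) measure_Ioo_lt_top.ne) (fun k => ?_) ?_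
  · filter_upwards [ae_restrict_mem measurableSet_Ioo] with z hzmem
    have hz1 : z < 1 := lt_of_lt_of_le hzmem.2 hs
    have := decRearr_mem_Icc (hbd k) hz1
    rw [Real.norm_eq_abs, abs_le]
    exact ⟨this.1, this.2⟩
  · have hae : ∀ᵐ z ∂(volume.restrict (Set.Ioo (0 : ℝ) s)),
        z ∉ ⋃ n, {x : ℝ | ¬ContinuousWithinAt (fun y => -D n y) (Set.Iio x) x} :=
      ae_restrict_of_ae (measure_eq_zero_iff_ae_notMem.1 hBnull)
    filter_upwards [hae, ae_restrict_mem measurableSet_Ioo] with z hzB hzmem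
    have hz : z ∈ Set.Ioo (0 : ℝ) 1 := ⟨hzmem.1, lt_of_lt_of_le hzmem.2 hs⟩
    refine tendsto_decRearr_pt hmeas hf hbd hbf htend hz (fun ε hε => ?_)
    obtain ⟨n, hn⟩ := exists_nat_one_div_lt (show (0 : ℝ) < 1 - z by linarith [hz.2])
    have hzc : z < 1 - 1 / ((n : ℝ) + 1) := by linarith
    have hcont : ContinuousWithinAt (D n) (Set.Iio z) z := by
      have h1 : ContinuousWithinAt (fun y => -D n y) (Set.Iio z) z := by
        by_contra hcontra
        exact hzB (Set.mem_iUnion.2 ⟨n, hcontra⟩)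
      simpa [Pi.neg_def] using h1.neg
    have hDz : D n z = decRearr μ f z := by
      rw [hD]
      dsimp only
      rw [min_eq_left hzc.le]
    have hev1 : ∀ᶠ y in nhdsWithin z (Set.Iio z), D n y < decRearr μ f z + ε := by
      refine hcont.eventually_lt_const ?_
      rw [hDz]
      linarith
    have hev2 : ∀ᶠ y in nhdsWithin z (Set.Iio z), y ∈ Set.Ioi (0 : ℝ) :=
      eventually_nhdsWithin_of_eventually_nhds (isOpen_Ioi.eventually_mem hz.1)
    haveI : (nhdsWithin z (Set.Iio z)).NeBot := nhdsLT_neBot z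
    obtain ⟨y, ⟨hy1, hy2⟩, hy3⟩ := ((hev1.and hev2).and eventually_mem_nhdsWithin).exists
    refine ⟨y, ⟨hy2, hy3⟩, ?_⟩
    have heq : D n y = decRearr μ f y := by
      rw [hD]
      dsimp only
      rw [min_eq_left (le_of_lt (lt_trans hy3 hzc))]
    rwa [heq] at hy1

end Aux

/-- **Majorization passes to a.e. limits**: if `g_k ≺ h_k` for uniformly bounded
measurable functions on `[0,1]` and `g_k → g`, `h_k → h` almost everywhere,
then `g ≺ h`. -/
theorem fnMajorizedBy_of_tendsto_ae
    (gk hk : ℕ → ℝ → ℝ) (g h : ℝ → ℝ) (C : ℝ)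
    (hgmeas : ∀ k, Measurable (gk k)) (hhmeas : ∀ k, Measurable (hk k))
    (hgbdd : ∀ k, ∀ t ∈ Set.Icc (0 : ℝ) 1, |gk k t| ≤ C)
    (hhbdd : ∀ k, ∀ t ∈ Set.Icc (0 : ℝ) 1, |hk k t| ≤ C)
    (hmaj : ∀ k, FnMajorizedBy (volume.restrict (Set.Icc (0 : ℝ) 1)) (gk k)
      (volume.restrict (Set.Icc (0 : ℝ) 1)) (hk k))
    (hgtendsto : ∀ᵐ t ∂(volume.restrict (Set.Icc (0 : ℝ) 1)),
      Tendsto (fun k => gk k t) atTop (nhds (g t)))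
    (hhtendsto : ∀ᵐ t ∂(volume.restrict (Set.Icc (0 : ℝ) 1)),
      Tendsto (fun k => hk k t) atTop (nhds (h t))) :
    FnMajorizedBy (volume.restrict (Set.Icc (0 : ℝ) 1)) g
      (volume.restrict (Set.Icc (0 : ℝ) 1)) h := by
  set ν := volume.restrict (Set.Icc (0 : ℝ) 1) with hν
  haveI : IsProbabilityMeasure ν := by
    constructor
    rw [hν, Measure.restrict_apply_univ, Real.volume_Icc]
    norm_num
  have hgbd : ∀ k, ∀ᵐ t ∂ν, |gk k t| ≤ C := fun k => by
    filter_upwards [ae_restrict_mem measurableSet_Icc] with t ht using hgbdd k t ht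
  have hhbd : ∀ k, ∀ᵐ t ∂ν, |hk k t| ≤ C := fun k => by
    filter_upwards [ae_restrict_mem measurableSet_Icc] with t ht using hhbdd k t ht
  have hgae : AEMeasurable g ν :=
    aemeasurable_of_tendsto_metrizable_ae atTop (fun k => (hgmeas k).aemeasurable) hgtendsto
  have hhae : AEMeasurable h ν :=
    aemeasurable_of_tendsto_metrizable_ae atTop (fun k => (hhmeas k).aemeasurable) hhtendsto
  have hg'tend : ∀ᵐ t ∂ν, Tendsto (fun k => gk k t) atTop (nhds (hgae.mk g t)) := by
    filter_upwards [hgtendsto, hgae.ae_eq_mk] with t h1 h2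
    rwa [← h2]
  have hh'tend : ∀ᵐ t ∂ν, Tendsto (fun k => hk k t) atTop (nhds (hhae.mk h t)) := by
    filter_upwards [hhtendsto, hhae.ae_eq_mk] with t h1 h2
    rwa [← h2]
  have hdeq : ∀ (f f' : ℝ → ℝ), f =ᵐ[ν] f' → decRearr ν f = decRearr ν f' := by
    intro f f' hff'
    funext u
    unfold decRearr
    congr 1
    ext t
    have hmeq : ν {ω | t < f ω} = ν {ω | t < f' ω} :=
      measure_congr (hff'.mono fun ω hω => congrArg (fun x => (t < x : Prop)) hω)
    simp only [Set.mem_setOf_eq, hmeq]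
  have hdg : decRearr ν g = decRearr ν (hgae.mk g) := hdeq _ _ hgae.ae_eq_mk
  have hdh : decRearr ν h = decRearr ν (hhae.mk h) := hdeq _ _ hhae.ae_eq_mk
  constructor
  · intro s hs
    have Tg := tendsto_setIntegral_decRearr hgmeas hgae.measurable_mk hgbd hg'tend hs.2.le
    have Th := tendsto_setIntegral_decRearr hhmeas hhae.measurable_mk hhbd hh'tend hs.2.le
    rw [hdg, hdh]
    exact le_of_tendsto_of_tendsto' Tg Th (fun k => (hmaj k).1 s hs)
  · have Tg := tendsto_setIntegral_decRearr hgmeas hgae.measurable_mk hgbd hg'tend (le_refl 1)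
    have Th := tendsto_setIntegral_decRearr hhmeas hhae.measurable_mk hhbd hh'tend (le_refl 1)
    rw [hdg, hdh]
    exact tendsto_nhds_unique (Tg.congr fun k => (hmaj k).2) Th
end
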